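/- arXiv:0907.0790 — 7 statements merged into one kernel-verified Lean document; each statement's English description precedes it below -/
import Mathlib

section
/- The bivariate power series f(x,y) = ∑_{m,n≥0} ((2m+2n)!/((2m)!(2n)!)) x^m y^n equals the rational function (1-x-y)/(1-2x-2y-2xy+x^2+y^2) on a neighborhood of the origin. -/
open scoped Nat

lemma aux_antidiag_sum {R : Type*} [CommSemiring R] (u v : R) (k : ℕ) :
    ∑ p ∈ Finset.HasAntidiagonal.antidiagonal k, ((k.choose p.1 : ℕ) : R) * u ^ p.1 * v ^ p.2 = (u + v) ^ k := by
  rw [Finset.Nat.sum_antidiagonal_eq_sum_range_succ_mk, add_pow]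
  exact Finset.sum_congr rfl fun i hi => by ring

lemma aux_antidiag_sum' {R : Type*} [CommSemiring R] (u v : R) (k : ℕ) :
    ∑ p ∈ Finset.HasAntidiagonal.antidiagonal k, (((p.1 + p.2).choose p.1 : ℕ) : R) * u ^ p.1 * v ^ p.2
      = (u + v) ^ k := by
  rw [← aux_antidiag_sum u v k]
  refine Finset.sum_congr rfl fun p hp => ?_
  rw [Finset.HasAntidiagonal.mem_antidiagonal] at hp
  rw [hp]

lemma binom2_summable_real {u v : ℝ} (hu : 0 ≤ u) (hv : 0 ≤ v) (h : u + v < 1) :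
    Summable (fun p : ℕ × ℕ => (((p.1 + p.2).choose p.1 : ℕ) : ℝ) * u ^ p.1 * v ^ p.2) := by
  rw [← Finset.HasAntidiagonal.sigmaAntidiagonalEquivProd.summable_iff]
  set f : (Σ n : ℕ, Finset.HasAntidiagonal.antidiagonal n) → ℝ :=
    (fun p : ℕ × ℕ => (((p.1 + p.2).choose p.1 : ℕ) : ℝ) * u ^ p.1 * v ^ p.2) ∘
      Finset.HasAntidiagonal.sigmaAntidiagonalEquivProd with hf
  have hnn : ∀ x, 0 ≤ f x := by
    rintro ⟨n, p, hp⟩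
    exact mul_nonneg (mul_nonneg (Nat.cast_nonneg _) (pow_nonneg hu _)) (pow_nonneg hv _)
  rw [summable_sigma_of_nonneg hnn]
  constructor
  · intro n; exact (hasSum_fintype _).summable
  · have key : ∀ n : ℕ, ∑' (p : Finset.HasAntidiagonal.antidiagonal n), f ⟨n, p⟩ = (u + v) ^ n := by
      intro n
      rw [tsum_fintype, hf]
      simp only [Function.comp_apply, Finset.HasAntidiagonal.sigmaAntidiagonalEquivProd_apply]
      rw [Finset.sum_coe_sort (Finset.HasAntidiagonal.antidiagonal n)
        (fun p => (((p.1 + p.2).choose p.1 : ℕ) : ℝ) * u ^ p.1 * v ^ p.2)]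
      exact aux_antidiag_sum' u v n
    simp only [key]
    exact summable_geometric_of_lt_one (by linarith) h

lemma binom2_hasSum {u v : ℂ} (h : ‖u‖ + ‖v‖ < 1) :
    HasSum (fun p : ℕ × ℕ => (((p.1 + p.2).choose p.1 : ℕ) : ℂ) * u ^ p.1 * v ^ p.2)
      (1 - u - v)⁻¹ := by
  rw [← Finset.HasAntidiagonal.sigmaAntidiagonalEquivProd.hasSum_iff]
  have hsum : Summable ((fun p : ℕ × ℕ => (((p.1 + p.2).choose p.1 : ℕ) : ℂ) * u ^ p.1 * v ^ p.2)
      ∘ Finset.HasAntidiagonal.sigmaAntidiagonalEquivProd) := by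
    apply Summable.of_norm
    have := (binom2_summable_real (norm_nonneg u) (norm_nonneg v) h)
    rw [← Finset.HasAntidiagonal.sigmaAntidiagonalEquivProd.summable_iff] at this
    convert this using 2 with p
    simp [Function.comp_apply, norm_mul, norm_pow]
  refine HasSum.sigma_of_hasSum (g := fun k => (u + v) ^ k) ?_ ?_ hsum
  · have h1 : ‖u + v‖ < 1 := lt_of_le_of_lt (norm_add_le _ _) h
    have := hasSum_geometric_of_norm_lt_one h1
    rwa [sub_sub] at *
  · intro n
    have := hasSum_fintype (fun p : Finset.HasAntidiagonal.antidiagonal n =>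
      (((p.1.1 + p.1.2).choose p.1.1 : ℕ) : ℂ) * u ^ p.1.1 * v ^ p.1.2)
    convert this using 1
    · rfl
    rw [Finset.sum_coe_sort (Finset.HasAntidiagonal.antidiagonal n)
      (fun p => (((p.1 + p.2).choose p.1 : ℕ) : ℂ) * u ^ p.1 * v ^ p.2)]
    exact (aux_antidiag_sum' u v n).symm

theorem even_binom_series_rational :
    ∃ ε > (0 : ℝ), ∀ x y : ℂ, ‖x‖ < ε → ‖y‖ < ε →
      HasSum (fun mn : ℕ × ℕ =>
          (((2 * mn.1 + 2 * mn.2)! : ℂ) / ((2 * mn.1)! * (2 * mn.2)!)) *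
            x ^ mn.1 * y ^ mn.2)
        ((1 - x - y) / (1 - 2 * x - 2 * y - 2 * x * y + x ^ 2 + y ^ 2)) := by
  refine ⟨1/8, by norm_num, fun x y hx hy => ?_⟩
  obtain ⟨a, ha⟩ := IsAlgClosed.exists_pow_nat_eq x (n := 2) (by norm_num)
  obtain ⟨b, hb⟩ := IsAlgClosed.exists_pow_nat_eq y (n := 2) (by norm_num)
  subst ha hb
  have ha2 : ‖a‖ ^ 2 < 1/8 := by rwa [← norm_pow]
  have hb2 : ‖b‖ ^ 2 < 1/8 := by rwa [← norm_pow]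
  have hab : ‖a‖ + ‖b‖ < 1 := by
    nlinarith [norm_nonneg a, norm_nonneg b, sq_nonneg (‖a‖ - ‖b‖), sq_nonneg (‖a‖ + ‖b‖ - 1)]
  have hnorm : ∀ u v : ℂ, (‖u‖ = ‖a‖) → (‖v‖ = ‖b‖) → ‖u‖ + ‖v‖ < 1 := by
    intro u v h1 h2; rw [h1, h2]; exact hab
  have h1 := binom2_hasSum (u := a) (v := b) (hnorm _ _ rfl rfl)
  have h2 := binom2_hasSum (u := a) (v := -b) (hnorm _ _ rfl (norm_neg b))
  have h3 := binom2_hasSum (u := -a) (v := b) (hnorm _ _ (norm_neg a) rfl)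
  have h4 := binom2_hasSum (u := -a) (v := -b) (hnorm _ _ (norm_neg a) (norm_neg b))
  have hcomb := (((h1.add h2).add h3).add h4).mul_left (4⁻¹ : ℂ)
  have nz : ∀ u v : ℂ, ‖u‖ + ‖v‖ < 1 → (1 : ℂ) - u - v ≠ 0 := by
    intro u v huv h
    have h1 : (1 : ℂ) = u + v := by rw [← sub_eq_zero, ← h]; ring
    have h2 := norm_add_le u v
    rw [← h1, norm_one] at h2
    linarith
  have n1 := nz a b (hnorm _ _ rfl rfl)
  have n2 : (1 : ℂ) - a + b ≠ 0 := by
    have := nz a (-b) (hnorm _ _ rfl (norm_neg b)); intro h; apply this; rw [← h]; ring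
  have n3 : (1 : ℂ) + a - b ≠ 0 := by
    have := nz (-a) b (hnorm _ _ (norm_neg a) rfl); intro h; apply this; rw [← h]; ring
  have n4 : (1 : ℂ) + a + b ≠ 0 := by
    have := nz (-a) (-b) (hnorm _ _ (norm_neg a) (norm_neg b)); intro h; apply this; rw [← h]; ring
  have hval : (4⁻¹ : ℂ) * ((1 - a - b)⁻¹ + (1 - a - -b)⁻¹ + (1 - -a - b)⁻¹ + (1 - -a - -b)⁻¹)
      = (1 - a ^ 2 - b ^ 2) /
        (1 - 2 * a ^ 2 - 2 * b ^ 2 - 2 * a ^ 2 * b ^ 2 + (a ^ 2) ^ 2 + (b ^ 2) ^ 2) := by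
    have e2 : (1:ℂ) - a - -b = 1 - a + b := by ring
    have e3 : (1:ℂ) - -a - b = 1 + a - b := by ring
    have e4 : (1:ℂ) - -a - -b = 1 + a + b := by ring
    rw [e2, e3, e4]
    have hD : (1 : ℂ) - 2 * a ^ 2 - 2 * b ^ 2 - 2 * a ^ 2 * b ^ 2 + (a ^ 2) ^ 2 + (b ^ 2) ^ 2
        = (1 - a - b) * ((1 - a + b) * ((1 + a - b) * (1 + a + b))) := by ring
    rw [hD, eq_div_iff (mul_ne_zero n1 (mul_ne_zero n2 (mul_ne_zero n3 n4)))]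
    have expand : (4⁻¹ : ℂ) * ((1 - a - b)⁻¹ + (1 - a + b)⁻¹ + (1 + a - b)⁻¹ + (1 + a + b)⁻¹) *
        ((1 - a - b) * ((1 - a + b) * ((1 + a - b) * (1 + a + b))))
        = 4⁻¹ * (((1 - a - b)⁻¹ * (1 - a - b)) * ((1 - a + b) * (1 + a - b) * (1 + a + b))
            + ((1 - a + b)⁻¹ * (1 - a + b)) * ((1 - a - b) * (1 + a - b) * (1 + a + b))
            + ((1 + a - b)⁻¹ * (1 + a - b)) * ((1 - a - b) * (1 - a + b) * (1 + a + b))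
            + ((1 + a + b)⁻¹ * (1 + a + b)) * ((1 - a - b) * (1 - a + b) * (1 + a - b))) := by
      ring
    rw [expand, inv_mul_cancel₀ n1, inv_mul_cancel₀ n2, inv_mul_cancel₀ n3, inv_mul_cancel₀ n4]
    ring
  rw [hval] at hcomb
  have hGzero : ∀ p : ℕ × ℕ, p ∉ Set.range (fun mn : ℕ × ℕ => (2 * mn.1, 2 * mn.2)) →
      (4⁻¹ : ℂ) * ((((p.1 + p.2).choose p.1 : ℕ) : ℂ) * a ^ p.1 * b ^ p.2 +
          (((p.1 + p.2).choose p.1 : ℕ) : ℂ) * a ^ p.1 * (-b) ^ p.2 +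
          (((p.1 + p.2).choose p.1 : ℕ) : ℂ) * (-a) ^ p.1 * b ^ p.2 +
          (((p.1 + p.2).choose p.1 : ℕ) : ℂ) * (-a) ^ p.1 * (-b) ^ p.2) = 0 := by
    rintro ⟨i, j⟩ hp
    have hpar : ¬ (Even i ∧ Even j) := by
      rintro ⟨⟨m, hm⟩, ⟨n, hn⟩⟩
      exact hp ⟨(m, n), by simp only [Prod.mk.injEq]; omega⟩
    rcases Nat.even_or_odd i with hi | hi <;> rcases Nat.even_or_odd j with hj | hj
    · exact absurd ⟨hi, hj⟩ hpar
    · simp only [hi.neg_pow, hj.neg_pow]; ring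
    · simp only [hi.neg_pow, hj.neg_pow]; ring
    · simp only [hi.neg_pow, hj.neg_pow]; ring
  have hinj : Function.Injective (fun mn : ℕ × ℕ => (2 * mn.1, 2 * mn.2)) := by
    rintro ⟨i, j⟩ ⟨k, l⟩ h
    simp only [Prod.mk.injEq] at h ⊢
    omega
  have key := (hinj.hasSum_iff hGzero).mpr hcomb
  convert key using 1
  funext mn
  obtain ⟨m, n⟩ := mn
  simp only [Function.comp_apply]
  have e1 : Even (2 * m) := even_two_mul m
  have e2 : Even (2 * n) := even_two_mul n
  rw [e1.neg_pow, e2.neg_pow]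
  have hc : ((2 * m + 2 * n).choose (2 * m) : ℂ)
      = ((2 * m + 2 * n)! : ℂ) / (((2 * m)! : ℂ) * ((2 * n)! : ℂ)) := by
    rw [Nat.cast_choose ℂ (Nat.le_add_right _ _)]
    have h : 2 * m + 2 * n - 2 * m = 2 * n := by omega
    rw [h]
  rw [hc]
  have hpa : (a ^ 2) ^ m = a ^ (2 * m) := by rw [← pow_mul]
  have hpb : (b ^ 2) ^ n = b ^ (2 * n) := by rw [← pow_mul]
  rw [hpa, hpb]
  ring
end

section
/- If a formal power series ∑_{m,n≥0} a(m,n) x^{r₁ m} y^{r₂ n} (supported only on exponents divisible by r₁ in x and r₂ in y) equals a rational function f(x,y) = A(x,y)/B(x,y) with A, B coprime polynomials and B(0,0) ≠ 0, then A(ζ₁x, ζ₂y) = A(x,y) and B(ζ₁x, ζ₂y) = B(x,y) for all r₁-th roots of unity ζ₁ and r₂-th roots of unity ζ₂; consequently the series ∑_{m,n≥0} a(m,n) x^m y^n is also a rational function. -/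
open MvPolynomial

private lemma vecEta (v : Fin 2 → ℂ) : ![v 0, v 1] = v := by
  funext i; fin_cases i <;> rfl

private lemma zeroVec : (fun _ => (0 : ℂ)) = ![(0:ℂ), 0] := by
  funext i; fin_cases i <;> rfl

private lemma evalBind (g : Fin 2 → MvPolynomial (Fin 2) ℂ) (p : MvPolynomial (Fin 2) ℂ)
    (v : Fin 2 → ℂ) :
    eval v (bind₁ g p) = eval (fun i => eval v (g i)) p :=
  eval₂Hom_bind₁ _ _ _ _

private lemma evalScale (c : Fin 2 → ℂ) (p : MvPolynomial (Fin 2) ℂ) (v : Fin 2 → ℂ) :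
    eval v (bind₁ (fun i => C (c i) * X i) p) = eval (fun i => c i * v i) p := by
  rw [evalBind]
  have h : (fun i => eval v (C (c i) * X i)) = fun i => c i * v i := by
    funext i; simp
  rw [h]

private lemma polyEqOfLocal (P Q : MvPolynomial (Fin 2) ℂ) (δ : ℝ) (hδ : 0 < δ)
    (h : ∀ v : Fin 2 → ℂ, ‖v‖ < δ → eval v P = eval v Q) : P = Q := by
  have hP : AnalyticOnNhd ℂ (fun v : Fin 2 → ℂ => eval v P) Set.univ :=
    AnalyticOnNhd.eval_continuousLinearMap (ContinuousLinearMap.id ℂ (Fin 2 → ℂ)) P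
  have hQ : AnalyticOnNhd ℂ (fun v : Fin 2 → ℂ => eval v Q) Set.univ :=
    AnalyticOnNhd.eval_continuousLinearMap (ContinuousLinearMap.id ℂ (Fin 2 → ℂ)) Q
  have heq : (fun v : Fin 2 → ℂ => eval v P) =ᶠ[nhds 0] (fun v => eval v Q) := by
    filter_upwards [Metric.ball_mem_nhds (0 : Fin 2 → ℂ) hδ] with v hv
    exact h v (by simpa [dist_zero_right] using hv)
  have := AnalyticOnNhd.eq_of_eventuallyEq hP hQ heq
  exact MvPolynomial.funext fun x => congrFun this x

private lemma unitConst (u : MvPolynomial (Fin 2) ℂ) (h : IsUnit u) : ∃ c : ℂ, u = C c := by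
  have h1 : IsUnit (finSuccEquiv ℂ 1 u) := h.map (finSuccEquiv ℂ 1)
  obtain ⟨r, hr, hru⟩ := Polynomial.isUnit_iff.mp h1
  have h2 : IsUnit (finSuccEquiv ℂ 0 r) := hr.map (finSuccEquiv ℂ 0)
  obtain ⟨s, hs, hsr⟩ := Polynomial.isUnit_iff.mp h2
  obtain ⟨c, rfl⟩ := C_surjective (Fin 0) s
  have e0 : (MvPolynomial.finSuccEquiv ℂ 0) (C c) = Polynomial.C (C c) := by
    have h0 := RingHom.congr_fun (finSuccEquiv_comp_C_eq_C (R := ℂ) 0) c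
    simp only [RingHom.comp_apply] at h0
    rw [← h0]
    exact ((MvPolynomial.finSuccEquiv ℂ 0).apply_symm_apply _)
  have hr' : r = C c := (MvPolynomial.finSuccEquiv ℂ 0).injective (by rw [e0, ← hsr])
  refine ⟨c, ?_⟩
  have e1 : (MvPolynomial.finSuccEquiv ℂ 1) (C c) = Polynomial.C (C c) := by
    have h1' := RingHom.congr_fun (finSuccEquiv_comp_C_eq_C (R := ℂ) 1) c
    simp only [RingHom.comp_apply] at h1'
    rw [← h1']
    exact ((MvPolynomial.finSuccEquiv ℂ 1).apply_symm_apply _)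
  exact (MvPolynomial.finSuccEquiv ℂ 1).injective (by rw [e1, ← hru, hr'])

private lemma coeffScale (c : Fin 2 → ℂ) (p : MvPolynomial (Fin 2) ℂ) (d : Fin 2 →₀ ℕ) :
    coeff d (bind₁ (fun i => C (c i) * X i) p) = (∏ i, c i ^ d i) * coeff d p := by
  induction p using MvPolynomial.induction_on' with
  | add p q hp hq => simp [map_add, coeff_add, hp, hq, mul_add]
  | monomial d' a =>
    have key : (bind₁ (fun i => C (c i) * X i)) (monomial d' a)
        = monomial d' (a * ∏ i, c i ^ d' i) := by
      rw [bind₁_monomial, monomial_eq, C_mul]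
      have h1 : ∀ i ∈ d'.support, (C (c i) * X i : MvPolynomial (Fin 2) ℂ) ^ d' i
          = C (c i ^ d' i) * X i ^ d' i := fun i _ => by rw [mul_pow, C_pow]
      rw [Finset.prod_congr rfl h1, Finset.prod_mul_distrib, ← map_prod]
      have h2 : ∏ i ∈ d'.support, c i ^ d' i = ∏ i, c i ^ d' i :=
        Finsupp.prod_fintype d' (fun i e => c i ^ e) (fun i => pow_zero _)
      rw [h2]
      have h3 : (d'.prod fun n e => (X n : MvPolynomial (Fin 2) ℂ) ^ e)
          = ∏ i ∈ d'.support, X i ^ d' i := rfl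
      rw [h3]; ring
    rw [key, coeff_monomial, coeff_monomial]
    by_cases hd : d' = d
    · subst hd; simp only [if_true]; ring
    · simp [hd]

private noncomputable def compress (r₁ r₂ : ℕ) (p : MvPolynomial (Fin 2) ℂ) :
    MvPolynomial (Fin 2) ℂ :=
  ∑ d ∈ p.support,
    monomial (Finsupp.single 0 (d 0 / r₁) + Finsupp.single 1 (d 1 / r₂)) (coeff d p)

private lemma evalCompress (r₁ r₂ : ℕ) (p : MvPolynomial (Fin 2) ℂ)
    (hp : ∀ d ∈ p.support, r₁ ∣ d 0 ∧ r₂ ∣ d 1) (x y : ℂ) :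
    eval ![x ^ r₁, y ^ r₂] (compress r₁ r₂ p) = eval ![x, y] p := by
  rw [compress, map_sum, eval_eq']
  refine Finset.sum_congr rfl fun d hd => ?_
  obtain ⟨h1, h2⟩ := hp d hd
  rw [eval_monomial,
    Finsupp.prod_add_index' (fun i => pow_zero _) (fun i a b => pow_add _ _ _),
    Finsupp.prod_single_index, Finsupp.prod_single_index]
  simp only [Matrix.cons_val_zero, Matrix.cons_val_one, Matrix.head_cons, Fin.prod_univ_two]
  rw [← pow_mul, ← pow_mul, Nat.mul_div_cancel' h1, Nat.mul_div_cancel' h2]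
  · exact pow_zero _
  · exact pow_zero _

/-- A bivariate sequence of coefficients is the Taylor series of a rational function
(with denominator non-vanishing at the origin). -/
def IsRationalBivariateSeries (a : ℕ → ℕ → ℂ) : Prop :=
  ∃ p q : MvPolynomial (Fin 2) ℂ, MvPolynomial.eval (fun _ => (0 : ℂ)) q ≠ 0 ∧
    ∃ ε > (0 : ℝ), ∀ x y : ℂ, ‖x‖ < ε → ‖y‖ < ε →
      HasSum (fun mn : ℕ × ℕ => a mn.1 mn.2 * x ^ mn.1 * y ^ mn.2)
        (MvPolynomial.eval ![x, y] p / MvPolynomial.eval ![x, y] q)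

theorem sublattice_supported_rational_series
    (a : ℕ → ℕ → ℂ) (r₁ r₂ : ℕ) (hr₁ : 0 < r₁) (hr₂ : 0 < r₂)
    (A B : MvPolynomial (Fin 2) ℂ) (hcop : IsCoprime A B)
    (hB0 : MvPolynomial.eval (fun _ => (0 : ℂ)) B ≠ 0)
    (ε : ℝ) (hε : 0 < ε)
    (hsum : ∀ x y : ℂ, ‖x‖ < ε → ‖y‖ < ε →
      HasSum (fun mn : ℕ × ℕ => a mn.1 mn.2 * x ^ (r₁ * mn.1) * y ^ (r₂ * mn.2))
        (MvPolynomial.eval ![x, y] A / MvPolynomial.eval ![x, y] B)) :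
    (∀ ζ₁ ζ₂ : ℂ, ζ₁ ^ r₁ = 1 → ζ₂ ^ r₂ = 1 →
        MvPolynomial.bind₁ (fun i => MvPolynomial.C (![ζ₁, ζ₂] i) * MvPolynomial.X i) A = A ∧
        MvPolynomial.bind₁ (fun i => MvPolynomial.C (![ζ₁, ζ₂] i) * MvPolynomial.X i) B = B) ∧
      IsRationalBivariateSeries a := by
  have hB0' : eval ![(0:ℂ), 0] B ≠ 0 := by rwa [zeroVec] at hB0
  have hBne : B ≠ 0 := fun h => hB0 (by simp [h])
  have main : ∀ ζ₁ ζ₂ : ℂ, ζ₁ ^ r₁ = 1 → ζ₂ ^ r₂ = 1 →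
      MvPolynomial.bind₁ (fun i => MvPolynomial.C (![ζ₁, ζ₂] i) * MvPolynomial.X i) A = A ∧
      MvPolynomial.bind₁ (fun i => MvPolynomial.C (![ζ₁, ζ₂] i) * MvPolynomial.X i) B = B := by
    intro ζ₁ ζ₂ hζ₁ hζ₂
    set σ : MvPolynomial (Fin 2) ℂ →ₐ[ℂ] MvPolynomial (Fin 2) ℂ :=
      bind₁ (fun i => C (![ζ₁, ζ₂] i) * X i) with hσ
    -- norms of roots of unity
    have normroot : ∀ (ζ : ℂ) (r : ℕ), 0 < r → ζ ^ r = 1 → ‖ζ‖ = 1 := by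
      intro ζ r hr h
      have h1 : ‖ζ‖ ^ r = 1 := by rw [← norm_pow, h, norm_one]
      rcases lt_trichotomy ‖ζ‖ 1 with hlt | heq | hgt
      · exact absurd h1 (by nlinarith [pow_lt_one₀ (norm_nonneg ζ) hlt hr.ne'])
      · exact heq
      · exact absurd h1 (by nlinarith [one_lt_pow₀ hgt hr.ne'])
    have hn₁ : ‖ζ₁‖ = 1 := normroot ζ₁ r₁ hr₁ hζ₁
    have hn₂ : ‖ζ₂‖ = 1 := normroot ζ₂ r₂ hr₂ hζ₂
    -- quotient equality on the polydisc
    have key : ∀ x y : ℂ, ‖x‖ < ε → ‖y‖ < ε →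
        eval ![ζ₁ * x, ζ₂ * y] A / eval ![ζ₁ * x, ζ₂ * y] B
          = eval ![x, y] A / eval ![x, y] B := by
      intro x y hx hy
      have h1 := hsum x y hx hy
      have h2 := hsum (ζ₁ * x) (ζ₂ * y)
        (by rw [norm_mul, hn₁, one_mul]; exact hx)
        (by rw [norm_mul, hn₂, one_mul]; exact hy)
      have hfun : (fun mn : ℕ × ℕ =>
          a mn.1 mn.2 * (ζ₁ * x) ^ (r₁ * mn.1) * (ζ₂ * y) ^ (r₂ * mn.2))
          = fun mn : ℕ × ℕ => a mn.1 mn.2 * x ^ (r₁ * mn.1) * y ^ (r₂ * mn.2) := by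
        funext mn
        rw [mul_pow, mul_pow, pow_mul ζ₁, hζ₁, one_pow, one_mul,
          pow_mul ζ₂, hζ₂, one_pow, one_mul]
      rw [hfun] at h2
      exact h2.unique h1
    -- evaluation of σ
    have evσ : ∀ (P : MvPolynomial (Fin 2) ℂ) (x y : ℂ),
        eval ![x, y] (σ P) = eval ![ζ₁ * x, ζ₂ * y] P := by
      intro P x y
      rw [hσ, evalScale]
      have h : (fun i => ![ζ₁, ζ₂] i * ![x, y] i) = ![ζ₁ * x, ζ₂ * y] := by
        funext i; fin_cases i <;> simp
      rw [h]
    -- σ B does not vanish at 0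
    have hσB0 : eval ![(0:ℂ), 0] (σ B) ≠ 0 := by
      rw [evσ, mul_zero, mul_zero]; exact hB0'
    -- open set where both denominators are nonzero
    have hopen : IsOpen {v : Fin 2 → ℂ | eval v B ≠ 0 ∧ eval v (σ B) ≠ 0} := by
      have h1 : IsOpen {v : Fin 2 → ℂ | eval v B ≠ 0} :=
        isOpen_ne.preimage (MvPolynomial.continuous_eval _)
      have h2 : IsOpen {v : Fin 2 → ℂ | eval v (σ B) ≠ 0} :=
        isOpen_ne.preimage (MvPolynomial.continuous_eval _)
      exact h1.inter h2
    have hmem : (0 : Fin 2 → ℂ) ∈ {v : Fin 2 → ℂ | eval v B ≠ 0 ∧ eval v (σ B) ≠ 0} := by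
      have h00 : ![(0:ℂ), 0] = (0 : Fin 2 → ℂ) := by funext i; fin_cases i <;> rfl
      exact ⟨by rwa [h00] at hB0', by rwa [h00] at hσB0⟩
    obtain ⟨δ, hδ, hball⟩ := Metric.isOpen_iff.mp hopen 0 hmem
    -- polynomial identity A * σB = σA * B
    have hpoly : A * σ B = σ A * B := by
      apply polyEqOfLocal _ _ (min δ ε) (lt_min hδ hε)
      intro v hv
      have hv' : ∀ i, ‖v i‖ < min δ ε := fun i => lt_of_le_of_lt (norm_le_pi_norm v i) hv
      have hvball : v ∈ Metric.ball (0 : Fin 2 → ℂ) δ := by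
        rw [Metric.mem_ball, dist_zero_right]
        exact lt_of_lt_of_le hv (min_le_left _ _)
      obtain ⟨hb1, hb2⟩ := hball hvball
      have hx : ‖v 0‖ < ε := lt_of_lt_of_le (hv' 0) (min_le_right _ _)
      have hy : ‖v 1‖ < ε := lt_of_lt_of_le (hv' 1) (min_le_right _ _)
      have hk := key (v 0) (v 1) hx hy
      rw [← evσ A (v 0) (v 1), ← evσ B (v 0) (v 1), vecEta] at hk
      have := div_eq_div_iff hb2 hb1 |>.mp hk
      rw [map_mul, map_mul]
      exact this.symm
    -- divisibility from coprimality
    have hcop' : IsCoprime (σ A) (σ B) := hcop.map (σ : MvPolynomial (Fin 2) ℂ →+* MvPolynomial (Fin 2) ℂ)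
    have hBd : B ∣ σ B :=
      hcop.symm.dvd_of_dvd_mul_right ⟨σ A, by linear_combination hpoly⟩
    have hBd' : σ B ∣ B :=
      hcop'.symm.dvd_of_dvd_mul_right ⟨A, by linear_combination -hpoly⟩
    -- B is invariant
    have hBinv : σ B = B := by
      obtain ⟨u, hu⟩ := associated_of_dvd_dvd hBd hBd'
      obtain ⟨cu, hcu⟩ := unitConst u u.isUnit
      have heval : eval ![(0:ℂ), 0] (σ B) = eval ![(0:ℂ), 0] B := by
        rw [evσ, mul_zero, mul_zero]
      rw [← hu, hcu, map_mul, eval_C] at heval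
      have hc1 : cu = 1 :=
        mul_left_cancel₀ hB0' (by rw [mul_one]; exact heval)
      rw [← hu, hcu, hc1, map_one, mul_one]
    have hAinv : σ A = A := by
      rw [hBinv] at hpoly
      exact (mul_right_cancel₀ hBne hpoly.symm)
    exact ⟨hAinv, hBinv⟩
  refine ⟨main, ?_⟩
  -- support divisibility
  have hζ₁ := Complex.isPrimitiveRoot_exp r₁ hr₁.ne'
  have hζ₂ := Complex.isPrimitiveRoot_exp r₂ hr₂.ne'
  set ζ₁ := Complex.exp (2 * Real.pi * Complex.I / r₁)
  set ζ₂ := Complex.exp (2 * Real.pi * Complex.I / r₂)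
  have hdvd : ∀ P : MvPolynomial (Fin 2) ℂ,
      (MvPolynomial.bind₁ (fun i => MvPolynomial.C (![ζ₁, 1] i) * MvPolynomial.X i) P = P) →
      (MvPolynomial.bind₁ (fun i => MvPolynomial.C (![(1:ℂ), ζ₂] i) * MvPolynomial.X i) P = P) →
      ∀ d ∈ P.support, r₁ ∣ d 0 ∧ r₂ ∣ d 1 := by
    intro P h1 h2 d hd
    have hc : coeff d P ≠ 0 := by rwa [MvPolynomial.mem_support_iff] at hd
    constructor
    · have := coeffScale ![ζ₁, 1] P d
      rw [h1] at this
      rw [Fin.prod_univ_two] at this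
      simp only [Matrix.cons_val_zero, Matrix.cons_val_one, Matrix.head_cons, one_pow,
        mul_one] at this
      have hpow : ζ₁ ^ d 0 = 1 := by
        by_contra hne
        exact hc (by
          have := sub_eq_zero.mpr this.symm
          rw [← sub_one_mul] at this
          rcases mul_eq_zero.mp this with h | h
          · exact absurd (by linear_combination h) hne
          · exact h)
      exact hζ₁.dvd_of_pow_eq_one _ hpow
    · have := coeffScale ![(1:ℂ), ζ₂] P d
      rw [h2] at this
      rw [Fin.prod_univ_two] at this
      simp only [Matrix.cons_val_zero, Matrix.cons_val_one, Matrix.head_cons, one_pow,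
        one_mul] at this
      have hpow : ζ₂ ^ d 1 = 1 := by
        by_contra hne
        exact hc (by
          have := sub_eq_zero.mpr this.symm
          rw [← sub_one_mul] at this
          rcases mul_eq_zero.mp this with h | h
          · exact absurd (by linear_combination h) hne
          · exact h)
      exact hζ₂.dvd_of_pow_eq_one _ hpow
  obtain ⟨hA1, hB1⟩ := main ζ₁ 1 (hζ₁.pow_eq_one) (one_pow r₂)
  obtain ⟨hA2, hB2⟩ := main 1 ζ₂ (one_pow r₁) (hζ₂.pow_eq_one)
  have hAdvd := hdvd A hA1 hA2
  have hBdvd := hdvd B hB1 hB2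
  -- build the compressed rational function
  refine ⟨compress r₁ r₂ A, compress r₁ r₂ B, ?_, ?_⟩
  · rw [zeroVec]
    have h0 : ((0:ℂ)) ^ r₁ = 0 := zero_pow hr₁.ne'
    have h0' : ((0:ℂ)) ^ r₂ = 0 := zero_pow hr₂.ne'
    have := evalCompress r₁ r₂ B hBdvd 0 0
    rw [h0, h0'] at this
    rw [this]
    exact hB0'
  · set η := min ε 1 with hη
    have hη0 : 0 < η := lt_min hε one_pos
    have hη1 : η ≤ 1 := min_le_right _ _
    refine ⟨η ^ (r₁ + r₂), pow_pos hη0 _, ?_⟩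
    intro u v hu hv
    obtain ⟨x, hx⟩ := IsAlgClosed.exists_pow_nat_eq u hr₁
    obtain ⟨y, hy⟩ := IsAlgClosed.exists_pow_nat_eq v hr₂
    have hxn : ‖x‖ < η := by
      have h1 : ‖x‖ ^ r₁ < η ^ r₁ := by
        rw [← norm_pow, hx]
        exact lt_of_lt_of_le hu (pow_le_pow_of_le_one hη0.le hη1 (Nat.le_add_right _ _))
      exact lt_of_pow_lt_pow_left₀ r₁ hη0.le h1
    have hyn : ‖y‖ < η := by
      have h1 : ‖y‖ ^ r₂ < η ^ r₂ := by
        rw [← norm_pow, hy]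
        exact lt_of_lt_of_le hv (pow_le_pow_of_le_one hη0.le hη1 (Nat.le_add_left _ _))
      exact lt_of_pow_lt_pow_left₀ r₂ hη0.le h1
    have hxε : ‖x‖ < ε := lt_of_lt_of_le hxn (min_le_left _ _)
    have hyε : ‖y‖ < ε := lt_of_lt_of_le hyn (min_le_left _ _)
    have h := hsum x y hxε hyε
    have hfun : (fun mn : ℕ × ℕ => a mn.1 mn.2 * u ^ mn.1 * v ^ mn.2)
        = fun mn : ℕ × ℕ => a mn.1 mn.2 * x ^ (r₁ * mn.1) * y ^ (r₂ * mn.2) := by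
      funext mn
      rw [← hx, ← hy, ← pow_mul, ← pow_mul]
    rw [hfun]
    have hvalA := evalCompress r₁ r₂ A hAdvd x y
    have hvalB := evalCompress r₁ r₂ B hBdvd x y
    rw [hx] at hvalA hvalB
    rw [hy] at hvalA hvalB
    rw [hvalA, hvalB]
    exact h
end

section
/- Let p₁,…,p_r, q₁,…,q_s be positive integers with ∑p_i = ∑q_j and set A_n = (∏_{i}(p_i n)!)/(∏_{j}(q_j n)!). Then A_n is an integer for all n ≥ 0 if and only if the Landau function L(x) = ∑{q_j x} − ∑{p_i x} satisfies L(x) ≥ 0 for all x ∈ ℝ. -/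
open scoped Nat

/-- Nat division as an integer floor. -/
lemma landau_natdiv_eq_floor (a d : ℕ) : ((a / d : ℕ) : ℤ) = ⌊(a : ℝ) / d⌋ := by
  rw [← Nat.floor_div_eq_div (K := ℝ) a d,
    Int.natCast_floor_eq_floor (by positivity)]

/-- Legendre's formula. -/
lemma landau_legendre {l : ℕ} (hl : l.Prime) (m b : ℕ) (hb : m < b) :
    (m !).factorization l = ∑ ν ∈ Finset.Ico 1 b, m / l ^ ν := by
  haveI : Fact l.Prime := ⟨hl⟩
  rw [Nat.factorization_def _ hl,
    padicValNat_factorial (lt_of_le_of_lt (Nat.log_le_self l m) hb)]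

/-- From the fract hypothesis, a reversed floor inequality. -/
lemma landau_floor_le (r s : ℕ) (p : Fin r → ℕ) (q : Fin s → ℕ)
    (hbal : ∑ i, p i = ∑ j, q j)
    (hfract : ∀ x : ℝ, 0 ≤ ∑ j, Int.fract ((q j : ℝ) * x) - ∑ i, Int.fract ((p i : ℝ) * x))
    (x : ℝ) : ∑ j, ⌊(q j : ℝ) * x⌋ ≤ ∑ i, ⌊(p i : ℝ) * x⌋ := by
  have h := hfract x
  have e : ∑ i, (p i : ℝ) * x = ∑ j, (q j : ℝ) * x := by
    rw [← Finset.sum_mul, ← Finset.sum_mul]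
    norm_cast
    rw [hbal]
  simp only [Int.fract, Finset.sum_sub_distrib] at h
  have h2 : (((∑ j, ⌊(q j : ℝ) * x⌋) : ℤ) : ℝ) ≤ (((∑ i, ⌊(p i : ℝ) * x⌋) : ℤ) : ℝ) := by
    push_cast
    linarith
  exact_mod_cast h2

/-- Nat-division version. -/
lemma landau_div_le (r s : ℕ) (p : Fin r → ℕ) (q : Fin s → ℕ)
    (hbal : ∑ i, p i = ∑ j, q j)
    (hfract : ∀ x : ℝ, 0 ≤ ∑ j, Int.fract ((q j : ℝ) * x) - ∑ i, Int.fract ((p i : ℝ) * x))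
    (n d : ℕ) : ∑ j, q j * n / d ≤ ∑ i, p i * n / d := by
  have h := landau_floor_le r s p q hbal hfract ((n : ℝ) / d)
  have key : ∀ m : ℕ, ⌊(m : ℝ) * ((n : ℝ) / d)⌋ = ((m * n / d : ℕ) : ℤ) := by
    intro m
    rw [landau_natdiv_eq_floor]
    congr 1
    push_cast
    ring
  simp only [key] at h
  exact_mod_cast h

theorem landau_criterion
    (r s : ℕ) (p : Fin r → ℕ) (q : Fin s → ℕ)
    (hp : ∀ i, 0 < p i) (hq : ∀ j, 0 < q j)
    (hbal : ∑ i, p i = ∑ j, q j) :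
    (∀ n : ℕ, (∏ j, (q j * n)!) ∣ ∏ i, (p i * n)!) ↔
      ∀ x : ℝ, 0 ≤ ∑ j, Int.fract ((q j : ℝ) * x) - ∑ i, Int.fract ((p i : ℝ) * x) := by
  constructor
  · intro hdvd
    intro x
    by_contra hneg
    push_neg at hneg
    set y := Int.fract x with hy
    have hy0 : 0 ≤ y := Int.fract_nonneg x
    have hy1 : y < 1 := Int.fract_lt_one x
    have hfr : ∀ m : ℕ, Int.fract ((m : ℝ) * x) = Int.fract ((m : ℝ) * y) := by
      intro m
      conv_lhs => rw [← Int.floor_add_fract x]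
      rw [mul_add, show ((m : ℝ) * (⌊x⌋ : ℝ)) = (((m : ℤ) * ⌊x⌋ : ℤ) : ℝ) by push_cast; ring,
        Int.fract_intCast_add]
    simp only [hfr] at hneg
    -- integer form
    have e : ∑ i, (p i : ℝ) * y = ∑ j, (q j : ℝ) * y := by
      rw [← Finset.sum_mul, ← Finset.sum_mul]
      norm_cast
      rw [hbal]
    have hF : ∑ i, ⌊(p i : ℝ) * y⌋ < ∑ j, ⌊(q j : ℝ) * y⌋ := by
      simp only [Int.fract, Finset.sum_sub_distrib] at hneg
      have h2 : (((∑ i, ⌊(p i : ℝ) * y⌋) : ℤ) : ℝ) < (((∑ j, ⌊(q j : ℝ) * y⌋) : ℤ) : ℝ) := by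
        push_cast
        linarith
      exact_mod_cast h2
    -- y > 0
    have hy0' : 0 < y := by
      rcases lt_or_eq_of_le hy0 with h | h
      · exact h
      · exfalso
        rw [← h] at hneg
        simp at hneg
    -- M and nonemptiness
    set M := ∑ i, p i with hM
    have hMpos : 0 < M := by
      rcases Nat.eq_zero_or_pos M with h | h
      swap
      · exact h
      · exfalso
        have hr0 : r = 0 := by
          by_contra hr
          have := hp ⟨0, Nat.pos_of_ne_zero hr⟩
          have hle : p ⟨0, Nat.pos_of_ne_zero hr⟩ ≤ M :=
            Finset.single_le_sum (fun _ _ => Nat.zero_le _) (Finset.mem_univ _)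
          omega
        have hs0 : s = 0 := by
          by_contra hs
          have := hq ⟨0, Nat.pos_of_ne_zero hs⟩
          have hle : q ⟨0, Nat.pos_of_ne_zero hs⟩ ≤ ∑ j, q j :=
            Finset.single_le_sum (fun _ _ => Nat.zero_le _) (Finset.mem_univ _)
          omega
        subst hr0; subst hs0
        simp at hF
    have hr : 0 < r := by
      by_contra hr
      have : r = 0 := by omega
      subst this
      rw [hM] at hMpos
      simp at hMpos
    have hs : 0 < s := by
      by_contra hs
      have : s = 0 := by omega
      subst this
      rw [hbal] at hMpos
      simp at hMpos
    have hpM : ∀ i, p i ≤ M := fun i =>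
      Finset.single_le_sum (fun _ _ => Nat.zero_le _) (Finset.mem_univ i)
    have hqM : ∀ j, q j ≤ M := fun j => by
      rw [hbal]
      exact Finset.single_le_sum (fun _ _ => Nat.zero_le _) (Finset.mem_univ j)
    haveI : Nonempty (Fin r) := ⟨⟨0, hr⟩⟩
    haveI : Nonempty (Fin s) := ⟨⟨0, hs⟩⟩
    -- choose a large prime l
    set C1 : ℝ := Finset.univ.sup' Finset.univ_nonempty
      (fun i : Fin r => (p i : ℝ) / (1 - Int.fract ((p i : ℝ) * y))) with hC1
    set C2 : ℝ := Finset.univ.sup' Finset.univ_nonempty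
      (fun j : Fin s => (q j : ℝ) / (1 - Int.fract ((q j : ℝ) * y))) with hC2
    set B : ℝ := max (max C1 C2) (max (M : ℝ) (1 / (1 - y))) with hB
    obtain ⟨l, hlB, hlp⟩ := Nat.exists_infinite_primes (⌈B⌉₊ + 1)
    have hlB' : B < (l : ℝ) := by
      have h1 : B ≤ (⌈B⌉₊ : ℝ) := Nat.le_ceil B
      have h2 : ((⌈B⌉₊ + 1 : ℕ) : ℝ) ≤ (l : ℝ) := by exact_mod_cast hlB
      push_cast at h2
      linarith
    have hlpos : (0 : ℝ) < l := by
      have := hlp.pos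
      exact_mod_cast this
    have hlM : M < l := by
      have : (M : ℝ) < l := lt_of_le_of_lt (le_trans (le_max_left _ _) (le_max_right _ _)) hlB'
      exact_mod_cast this
    have h1y : 1 < (l : ℝ) * (1 - y) := by
      have h : 1 / (1 - y) < (l : ℝ) :=
        lt_of_le_of_lt (le_trans (le_max_right _ _) (le_max_right _ _)) hlB'
      rw [div_lt_iff₀ (by linarith)] at h
      linarith [mul_comm (l : ℝ) (1 - y)]
    -- set n
    set n : ℕ := ⌈(l : ℝ) * y⌉₊ with hn
    have hn_lb : (l : ℝ) * y ≤ n := Nat.le_ceil _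
    have hn_ub : (n : ℝ) < (l : ℝ) * y + 1 := Nat.ceil_lt_add_one (by positivity)
    have hn_pos : 0 < n := Nat.ceil_pos.mpr (by positivity)
    have hnl : n < l := by
      have : (n : ℝ) < (l : ℝ) := by nlinarith
      exact_mod_cast this
    -- key floor equality
    have hkey : ∀ m : ℕ, 0 < m → (m : ℝ) < (l : ℝ) * (1 - Int.fract ((m : ℝ) * y)) →
        ((m * n / l : ℕ) : ℤ) = ⌊(m : ℝ) * y⌋ := by
      intro m hmpos hm
      rw [landau_natdiv_eq_floor]
      have hrw : ((m * n : ℕ) : ℝ) / l = (m : ℝ) * ((n : ℝ) / l) := by push_cast; ring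
      rw [hrw]
      rw [Int.floor_eq_iff]
      constructor
      · calc (⌊(m : ℝ) * y⌋ : ℝ) ≤ (m : ℝ) * y := Int.floor_le _
          _ ≤ (m : ℝ) * ((n : ℝ) / l) := by
              apply mul_le_mul_of_nonneg_left _ (by positivity)
              rw [le_div_iff₀ hlpos]
              linarith [mul_comm y (l : ℝ)]
      · have hfr1 : (m : ℝ) / l < 1 - Int.fract ((m : ℝ) * y) := by
          rw [div_lt_iff₀ hlpos]
          linarith [mul_comm ((l : ℝ)) (1 - Int.fract ((m : ℝ) * y))]
        have hub : (m : ℝ) * ((n : ℝ) / l) < (m : ℝ) * y + (m : ℝ) / l := by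
          have hm0 : (0 : ℝ) < m := by exact_mod_cast hmpos
          have hnd : (n : ℝ) / l < y + 1 / l := by
            rw [div_lt_iff₀ hlpos]
            have := hn_ub
            field_simp
            linarith [mul_comm y (l:ℝ)]
          calc (m : ℝ) * ((n : ℝ) / l) < (m : ℝ) * (y + 1 / l) :=
                mul_lt_mul_of_pos_left hnd hm0
            _ = (m : ℝ) * y + (m : ℝ) / l := by ring
        have hfl : (m : ℝ) * y = (⌊(m : ℝ) * y⌋ : ℝ) + Int.fract ((m : ℝ) * y) :=
          (Int.floor_add_fract _).symm
        push_cast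
        linarith
    have hfposgen : ∀ a : ℝ, 0 < 1 - Int.fract a := fun a => by
      have := Int.fract_lt_one a; linarith
    have hkp : ∀ i, ((p i * n / l : ℕ) : ℤ) = ⌊(p i : ℝ) * y⌋ := by
      intro i
      apply hkey _ (hp i)
      have h1 : (p i : ℝ) / (1 - Int.fract ((p i : ℝ) * y)) ≤ C1 :=
        Finset.le_sup' (fun i : Fin r => (p i : ℝ) / (1 - Int.fract ((p i : ℝ) * y)))
          (Finset.mem_univ i)
      have h2 : (p i : ℝ) / (1 - Int.fract ((p i : ℝ) * y)) < l :=
        lt_of_le_of_lt (le_trans h1 (le_trans (le_max_left _ _) (le_max_left _ _))) hlB'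
      rw [div_lt_iff₀ (hfposgen _)] at h2
      linarith [mul_comm (l : ℝ) (1 - Int.fract ((p i : ℝ) * y))]
    have hkq : ∀ j, ((q j * n / l : ℕ) : ℤ) = ⌊(q j : ℝ) * y⌋ := by
      intro j
      apply hkey _ (hq j)
      have h1 : (q j : ℝ) / (1 - Int.fract ((q j : ℝ) * y)) ≤ C2 :=
        Finset.le_sup' (fun j : Fin s => (q j : ℝ) / (1 - Int.fract ((q j : ℝ) * y)))
          (Finset.mem_univ j)
      have h2 : (q j : ℝ) / (1 - Int.fract ((q j : ℝ) * y)) < l :=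
        lt_of_le_of_lt (le_trans h1 (le_trans (le_max_right _ _) (le_max_left _ _))) hlB'
      rw [div_lt_iff₀ (hfposgen _)] at h2
      linarith [mul_comm (l : ℝ) (1 - Int.fract ((q j : ℝ) * y))]
    -- factorization computation
    set b := M * n + 1 with hbdef
    have hMn : 0 < M * n := Nat.mul_pos hMpos hn_pos
    have hb1 : 1 ∈ Finset.Ico 1 b := by
      simp only [Finset.mem_Ico]
      omega
    have htail : ∀ m : ℕ, m ≤ M → ∀ ν ∈ Finset.Ico 1 b, ν ≠ 1 → m * n / l ^ ν = 0 := by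
      intro m hm ν hν hν1
      apply Nat.div_eq_of_lt
      simp only [Finset.mem_Ico] at hν
      have h2ν : 2 ≤ ν := by omega
      have hmn : m * n ≤ (l - 1) * (l - 1) := Nat.mul_le_mul (by omega) (by omega)
      have hl1 : 1 ≤ l := hlp.pos
      have hll : (l - 1) * (l - 1) < l * l := by
        obtain ⟨k, rfl⟩ : ∃ k, l = k + 1 := ⟨l - 1, by omega⟩
        simp only [Nat.add_sub_cancel]
        nlinarith
      have hpow : l * l ≤ l ^ ν := by
        calc l * l = l ^ 2 := (sq l).symm
          _ ≤ l ^ ν := Nat.pow_le_pow_right hlp.pos h2ν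
      omega
    have hsum : ∀ m : ℕ, m ≤ M →
        ∑ ν ∈ Finset.Ico 1 b, m * n / l ^ ν = m * n / l := by
      intro m hm
      rw [Finset.sum_eq_single_of_mem 1 hb1 (fun ν hν hν1 => htail m hm ν hν hν1)]
      rw [pow_one]
    have hN1 : (∏ i, (p i * n)!) ≠ 0 :=
      Finset.prod_ne_zero_iff.mpr fun i _ => Nat.factorial_ne_zero _
    have hN2 : (∏ j, (q j * n)!) ≠ 0 :=
      Finset.prod_ne_zero_iff.mpr fun j _ => Nat.factorial_ne_zero _
    have hfac := (Nat.factorization_le_iff_dvd hN2 hN1).mpr (hdvd n)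
    have hfl : (∏ j, (q j * n)!).factorization l ≤ (∏ i, (p i * n)!).factorization l :=
      Finsupp.le_def.mp hfac l
    have hfac1 : (∏ i, (p i * n)!).factorization l = ∑ i, p i * n / l := by
      rw [Nat.factorization_prod fun i _ => Nat.factorial_ne_zero _, Finset.sum_apply']
      refine Finset.sum_congr rfl fun i _ => ?_
      rw [landau_legendre hlp _ b (by
        have := Nat.mul_le_mul_right n (hpM i)
        omega)]
      exact hsum (p i) (hpM i)
    have hfac2 : (∏ j, (q j * n)!).factorization l = ∑ j, q j * n / l := by
      rw [Nat.factorization_prod fun j _ => Nat.factorial_ne_zero _, Finset.sum_apply']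
      refine Finset.sum_congr rfl fun j _ => ?_
      rw [landau_legendre hlp _ b (by
        have := Nat.mul_le_mul_right n (hqM j)
        omega)]
      exact hsum (q j) (hqM j)
    rw [hfac1, hfac2] at hfl
    have hZ : ∑ j, ⌊(q j : ℝ) * y⌋ ≤ ∑ i, ⌊(p i : ℝ) * y⌋ := by
      calc ∑ j, ⌊(q j : ℝ) * y⌋ = ∑ j, ((q j * n / l : ℕ) : ℤ) := by
            exact Finset.sum_congr rfl fun j _ => (hkq j).symm
        _ ≤ ∑ i, ((p i * n / l : ℕ) : ℤ) := by exact_mod_cast hfl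
        _ = ∑ i, ⌊(p i : ℝ) * y⌋ := Finset.sum_congr rfl fun i _ => hkp i
    omega
  · intro hfract
    have hdivle : ∀ n d : ℕ, ∑ j, q j * n / d ≤ ∑ i, p i * n / d :=
      landau_div_le r s p q hbal hfract
    intro n
    have hN1 : (∏ i, (p i * n)!) ≠ 0 :=
      Finset.prod_ne_zero_iff.mpr fun i _ => Nat.factorial_ne_zero _
    have hN2 : (∏ j, (q j * n)!) ≠ 0 :=
      Finset.prod_ne_zero_iff.mpr fun j _ => Nat.factorial_ne_zero _
    rw [← Nat.factorization_le_iff_dvd hN2 hN1, Finsupp.le_def]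
    intro l
    by_cases hl : l.Prime
    · set b := (∑ i, p i) * n + 1 with hb
      have hfac1 : (∏ i, (p i * n)!).factorization l
          = ∑ i, ∑ ν ∈ Finset.Ico 1 b, p i * n / l ^ ν := by
        rw [Nat.factorization_prod fun i _ => Nat.factorial_ne_zero _]
        rw [Finset.sum_apply']
        refine Finset.sum_congr rfl fun i _ => ?_
        refine landau_legendre hl _ _ ?_
        have : p i ≤ ∑ i, p i := Finset.single_le_sum (fun _ _ => Nat.zero_le _) (Finset.mem_univ i)
        calc p i * n ≤ (∑ i, p i) * n := Nat.mul_le_mul_right n this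
          _ < b := Nat.lt_succ_self _
      have hfac2 : (∏ j, (q j * n)!).factorization l
          = ∑ j, ∑ ν ∈ Finset.Ico 1 b, q j * n / l ^ ν := by
        rw [Nat.factorization_prod fun j _ => Nat.factorial_ne_zero _]
        rw [Finset.sum_apply']
        refine Finset.sum_congr rfl fun j _ => ?_
        refine landau_legendre hl _ _ ?_
        have : q j ≤ ∑ j, q j := Finset.single_le_sum (fun _ _ => Nat.zero_le _) (Finset.mem_univ j)
        calc q j * n ≤ (∑ j, q j) * n := Nat.mul_le_mul_right n this
          _ = (∑ i, p i) * n := by rw [hbal]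
          _ < b := Nat.lt_succ_self _
      rw [hfac1, hfac2, Finset.sum_comm, Finset.sum_comm (s := Finset.univ)]
      exact Finset.sum_le_sum fun ν _ => hdivle n (l ^ ν)
    · simp [Nat.factorization_eq_zero_of_not_prime _ hl]
end

section
/- For coprime positive integers a and b, the factorial ratio (2(a+b)n)! (bn)! / ( ((a+b)n)! (2bn)! (an)! ) is an integer for every n ≥ 0. -/
open scoped Nat

open Nat Finset in
lemma key_div_ineq (x y d : ℕ) (hd : 0 < d) :
    (x + y) / d + (y + y) / d + x / d ≤ (x + y + (x + y)) / d + y / d := by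
  have E1 : (x + y) / d = x / d + y / d + if d ≤ x % d + y % d then 1 else 0 :=
    Nat.add_div hd
  have E2 : (y + y) / d = y / d + y / d + if d ≤ y % d + y % d then 1 else 0 :=
    Nat.add_div hd
  have E3 : (x + y + (x + y)) / d =
      (x + y) / d + (x + y) / d + if d ≤ (x + y) % d + (x + y) % d then 1 else 0 :=
    Nat.add_div hd
  have h1 : x % d < d := Nat.mod_lt _ hd
  have h2 : y % d < d := Nat.mod_lt _ hd
  by_cases hc : d ≤ x % d + y % d
  · have hI1 : (if d ≤ x % d + y % d then (1:ℕ) else 0) = 1 := if_pos hc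
    have I2 : (if d ≤ y % d + y % d then (1:ℕ) else 0) ≤ 1 := by split <;> omega
    omega
  · have hs : (x + y) % d = x % d + y % d := by
      rw [Nat.add_mod, Nat.mod_eq_of_lt (by omega)]
    have hI1 : (if d ≤ x % d + y % d then (1:ℕ) else 0) = 0 := if_neg hc
    rw [hs] at E3
    by_cases h3 : d ≤ y % d + y % d
    · have hI2 : (if d ≤ y % d + y % d then (1:ℕ) else 0) = 1 := if_pos h3
      have hI3 : (if d ≤ x % d + y % d + (x % d + y % d) then (1:ℕ) else 0) = 1 :=
        if_pos (by omega)
      omega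
    · have hI2 : (if d ≤ y % d + y % d then (1:ℕ) else 0) = 0 := if_neg h3
      omega

theorem factorial_ratio_family_two_integral
    (a b : ℕ) (ha : 0 < a) (hb : 0 < b) (hab : Nat.Coprime a b) (n : ℕ) :
    ((a + b) * n)! * (2 * b * n)! * (a * n)! ∣ (2 * (a + b) * n)! * (b * n)! := by
  have f1 : ((a + b) * n)! ≠ 0 := Nat.factorial_ne_zero _
  have f2 : (2 * b * n)! ≠ 0 := Nat.factorial_ne_zero _
  have f3 : (a * n)! ≠ 0 := Nat.factorial_ne_zero _
  have f4 : (2 * (a + b) * n)! ≠ 0 := Nat.factorial_ne_zero _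
  have f5 : (b * n)! ≠ 0 := Nat.factorial_ne_zero _
  rw [← Nat.factorization_le_iff_dvd (by positivity) (by positivity), Finsupp.le_def]
  intro p
  by_cases hp : p.Prime
  · haveI : Fact p.Prime := ⟨hp⟩
    rw [Nat.factorization_mul (mul_ne_zero f1 f2) f3, Nat.factorization_mul f1 f2,
      Nat.factorization_mul f4 f5]
    simp only [Finsupp.add_apply, Nat.factorization_def _ hp]
    set B := Nat.log p (2 * (a + b) * n) + 1 with hB
    have hlog : ∀ m : ℕ, m ≤ 2 * (a + b) * n → Nat.log p m < B :=
      fun m hm => Nat.lt_succ_of_le (Nat.log_mono_right hm)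
    rw [padicValNat_factorial (p := p) (b := B) (hlog _ (by nlinarith)),
      padicValNat_factorial (p := p) (b := B) (hlog _ (by nlinarith)),
      padicValNat_factorial (p := p) (b := B) (hlog _ (by nlinarith)),
      padicValNat_factorial (p := p) (b := B) (hlog _ le_rfl),
      padicValNat_factorial (p := p) (b := B) (hlog _ (by nlinarith))]
    rw [← Finset.sum_add_distrib, ← Finset.sum_add_distrib, ← Finset.sum_add_distrib]
    apply Finset.sum_le_sum
    intro i _
    have hd : 0 < p ^ i := Nat.pow_pos hp.pos
    have := key_div_ineq (a * n) (b * n) (p ^ i) hd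
    have e1 : (a + b) * n = a * n + b * n := by ring
    have e2 : 2 * b * n = b * n + b * n := by ring
    have e3 : 2 * (a + b) * n = (a * n + b * n) + (a * n + b * n) := by ring
    rw [e1, e2, e3]
    omega
  · simp [Nat.factorization_eq_zero_of_not_prime _ hp]
end

section
/- The bivariate series u₂(x,y) = ∑_{m,n≥0} ((2m)!(2n)!/(m! n! (m+n)!)) x^m y^n satisfies the identity u₂(x,y) = (1/(x+y−4xy)) ( x/√(1−4x) + y/√(1−4y) ) on a neighborhood of the origin minus the zero locus of x+y−4xy; in particular u₂ is an algebraic function. -/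
open scoped Nat

open Finset

noncomputable def cb (n : ℕ) : ℂ := (Nat.centralBinom n : ℂ)


lemma cb_succ (k : ℕ) : ((k:ℂ)+1) * cb (k+1) = 2*(2*(k:ℂ)+1) * cb k := by
  have h := congrArg (Nat.cast : ℕ → ℂ) (Nat.succ_mul_centralBinom_succ k)
  push_cast at h
  simpa [cb] using h

lemma cb_conv (n : ℕ) : ∑ k ∈ range (n+1), cb k * cb (n-k) = 4^n := by
  induction n with
  | zero => simp [cb, Nat.centralBinom]
  | succ n ih =>
    set V : ℂ := ∑ j ∈ range (n+2), (j:ℂ) * cb j * cb (n+1-j) with hV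
    have hrefl : ∑ j ∈ range (n+2), ((n+1-j:ℕ):ℂ) * cb (n+1-j) * cb j = V := by
      rw [hV, ← Finset.sum_range_reflect (fun j => (j:ℂ) * cb j * cb (n+1-j)) (n+2)]
      refine Finset.sum_congr rfl fun j hj => ?_
      simp only [mem_range] at hj
      have h1 : n + 2 - 1 - j = n + 1 - j := by omega
      have h2 : n + 1 - (n + 1 - j) = j := by omega
      simp only [h1, h2]
    have h1 : 2 * V = ((n:ℂ)+1) * ∑ k ∈ range (n+2), cb k * cb (n+1-k) := by
      rw [two_mul, mul_sum]
      nth_rewrite 1 [hV]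
      nth_rewrite 1 [← hrefl]
      rw [← Finset.sum_add_distrib]
      refine Finset.sum_congr rfl fun j hj => ?_
      simp only [mem_range] at hj
      have : ((n+1-j:ℕ):ℂ) = ((n:ℂ)+1) - (j:ℂ) := by
        rw [Nat.cast_sub (by omega)]; push_cast; ring
      rw [this]; ring
    have hshift : V = ∑ k ∈ range (n+1), 2*(2*(k:ℂ)+1) * cb k * cb (n-k) := by
      rw [hV, Finset.sum_range_succ' (fun j => (j:ℂ) * cb j * cb (n+1-j)) (n+1)]
      simp only [Nat.cast_zero, zero_mul, add_zero]
      refine Finset.sum_congr rfl fun k hk => ?_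
      have h2 : n + 1 - (k+1) = n - k := by omega
      rw [h2]
      push_cast
      rw [show ((k:ℂ)+1) * cb (k+1) * cb (n-k) = (((k:ℂ)+1) * cb (k+1)) * cb (n-k) by ring,
        cb_succ]
    have hrefl2 : ∑ k ∈ range (n+1), 2*(2*(k:ℂ)+1) * cb k * cb (n-k)
        = ∑ k ∈ range (n+1), 2*(2*((n:ℂ)-(k:ℂ))+1) * cb k * cb (n-k) := by
      rw [← Finset.sum_range_reflect (fun k => 2*(2*(k:ℂ)+1) * cb k * cb (n-k)) (n+1)]
      refine Finset.sum_congr rfl fun k hk => ?_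
      simp only [mem_range] at hk
      have h1 : n + 1 - 1 - k = n - k := by omega
      have h2 : n - (n - k) = k := by omega
      have h3 : ((n-k:ℕ):ℂ) = (n:ℂ) - (k:ℂ) := by
        rw [Nat.cast_sub (by omega)]
      simp only [h1, h2, h3]
      ring
    have h2 : 2 * V = (4*(n:ℂ)+4) * ∑ k ∈ range (n+1), cb k * cb (n-k) := by
      rw [two_mul]
      nth_rewrite 1 [hshift]
      nth_rewrite 1 [hshift]
      nth_rewrite 1 [hrefl2]
      rw [← Finset.sum_add_distrib, mul_sum]
      refine Finset.sum_congr rfl fun k hk => ?_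
      ring
    have hne : ((n:ℂ)+1) ≠ 0 := by
      exact_mod_cast Nat.cast_add_one_ne_zero (R := ℂ) n
    have : ((n:ℂ)+1) * ∑ k ∈ range (n+2), cb k * cb (n+1-k)
        = ((n:ℂ)+1) * (4 * ∑ k ∈ range (n+1), cb k * cb (n-k)) := by
      rw [← h1, h2]; ring
    have hmain := mul_left_cancel₀ hne this
    rw [show n+1+1 = n+2 from rfl, hmain, ih]
    ring

lemma cb_nat_le (n : ℕ) : Nat.centralBinom n ≤ 4^n := by
  calc Nat.centralBinom n ≤ ∑ i ∈ range (2*n+1), (2*n).choose i :=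
        Finset.single_le_sum (f := fun i => (2*n).choose i) (fun i _ => Nat.zero_le _)
          (Finset.mem_range.2 (by omega))
  _ = 2^(2*n) := Nat.sum_range_choose (2*n)
  _ = 4^n := by rw [pow_mul]; norm_num

lemma cb_norm_le {x : ℂ} (hx : ‖x‖ < 1/8) (n : ℕ) : ‖cb n * x^n‖ ≤ (1/2)^n := by
  rw [norm_mul, norm_pow]
  calc ‖cb n‖ * ‖x‖^n ≤ (4^n : ℝ) * (1/8)^n := by
        apply mul_le_mul
        · simp only [cb, Complex.norm_natCast]
          exact_mod_cast cb_nat_le n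
        · exact pow_le_pow_left₀ (norm_nonneg x) hx.le n
        · positivity
        · positivity
  _ = (1/2)^n := by rw [← mul_pow]; norm_num
lemma cb_summable_norm {x : ℂ} (hx : ‖x‖ < 1/8) :
    Summable (fun n => ‖cb n * x^n‖) :=
  Summable.of_nonneg_of_le (fun _ => norm_nonneg _) (cb_norm_le hx)
    (summable_geometric_of_lt_one (by norm_num) (by norm_num))

lemma cb_sq {x : ℂ} (hx : ‖x‖ < 1/8) :
    (∑' n, cb n * x^n) * (∑' n, cb n * x^n) = (1 - 4*x)⁻¹ := by
  rw [tsum_mul_tsum_eq_tsum_sum_range_of_summable_norm (cb_summable_norm hx)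
    (cb_summable_norm hx)]
  have h4x : ‖4*x‖ < 1 := by
    rw [norm_mul]; simp only [Complex.norm_ofNat]
    nlinarith [norm_nonneg x]
  have hg := hasSum_geometric_of_norm_lt_one h4x
  rw [← hg.tsum_eq]
  congr 1
  funext n
  calc ∑ k ∈ range (n+1), cb k * x^k * (cb (n-k) * x^(n-k))
      = ∑ k ∈ range (n+1), cb k * cb (n-k) * x^n := by
        refine Finset.sum_congr rfl fun k hk => ?_
        simp only [mem_range] at hk
        rw [show n = k + (n-k) by omega, pow_add]
        ring_nf
        rw [show k + (n-k) - k = n - k by omega]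
  _ = (4*x)^n := by rw [← Finset.sum_mul, cb_conv, mul_pow]

lemma cb_tsum_eq {x : ℂ} (hx : ‖x‖ < 1/8) :
    (∑' n, cb n * x^n) = ((1 - 4*x) ^ ((1:ℂ)/2))⁻¹ := by
  set s : Set ℂ := Metric.ball 0 (1/8) with hs
  have hxs : x ∈ s := by simpa [hs, Metric.mem_ball, dist_eq_norm] using hx
  set g : ℂ → ℂ := fun z => ∑' n, cb n * z^n with hg
  set q : ℂ → ℂ := fun z => (1 - 4*z) ^ ((1:ℂ)/2) with hq
  set h : ℂ → ℂ := fun z => g z * q z with hh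
  have hmem : ∀ z ∈ s, ‖z‖ < 1/8 := by
    intro z hz; simpa [hs, Metric.mem_ball, dist_eq_norm] using hz
  have hne : ∀ z ∈ s, (1 - 4*z) ≠ 0 := by
    intro z hz h0
    have : ‖(4:ℂ)*z‖ < 1 := by
      rw [norm_mul]; simp only [Complex.norm_ofNat]
      have := hmem z hz; nlinarith [norm_nonneg z]
    rw [sub_eq_zero] at h0
    rw [← h0] at this; simp at this
  have hqsq : ∀ z ∈ s, q z * q z = 1 - 4*z := by
    intro z hz
    rw [hq]
    rw [← Complex.cpow_add _ _ (hne z hz)]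
    norm_num
  have hsq : ∀ z ∈ s, h z = 1 ∨ h z = -1 := by
    intro z hz
    have h2 : h z * h z = 1 := by
      have := cb_sq (hmem z hz)
      calc h z * h z = (g z * g z) * (q z * q z) := by ring
      _ = (1 - 4*z)⁻¹ * (1 - 4*z) := by rw [hqsq z hz, hg]; rw [this]
      _ = 1 := inv_mul_cancel₀ (hne z hz)
    have : (h z - 1) * (h z + 1) = 0 := by ring_nf; linear_combination h2
    rcases mul_eq_zero.1 this with h' | h'
    · left; linear_combination h'
    · right; linear_combination h'
  -- continuity of h on s
  have hgcont : ContinuousOn g s := by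
    rw [hg]
    refine continuousOn_tsum (fun n => ?_) (summable_geometric_of_lt_one (by norm_num : (0:ℝ) ≤ 1/2) (by norm_num)) (fun n z hz => cb_norm_le (hmem z hz) n)
    exact (continuous_const.mul (continuous_pow n)).continuousOn
  have hqcont : ContinuousOn q s := by
    intro z hz
    apply ContinuousAt.continuousWithinAt
    rw [hq]
    have hslit : (1 - 4*z) ∈ Complex.slitPlane := by
      left
      have hz' := hmem z hz
      have h4 : |((4:ℂ)*z).re| ≤ 4 * ‖z‖ := by
        simpa [norm_mul] using (Complex.abs_re_le_norm ((4:ℂ)*z))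
      have hre : (1 - 4*z).re = 1 - ((4:ℂ)*z).re := by simp
      rw [hre]
      have := abs_le.1 h4
      linarith [this.2]
    exact ContinuousAt.cpow
      ((continuous_const.sub (continuous_const.mul continuous_id)).continuousAt)
      continuousAt_const hslit
  have hcont : ContinuousOn h s := hgcont.mul hqcont
  have hopen : IsOpen s := Metric.isOpen_ball
  -- clopen argument
  set u : Set ℂ := {z | z ∈ s ∧ h z ≠ -1} with hu
  set v : Set ℂ := {z | z ∈ s ∧ h z ≠ 1} with hv
  have houv : ∀ (w : Set ℂ) (c : ℂ), ({z | z ∈ s ∧ h z ≠ c}).Nonempty → True := fun _ _ _ => trivial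
  have hopen_aux : ∀ c : ℂ, IsOpen {z | z ∈ s ∧ h z ≠ c} := by
    intro c
    rw [isOpen_iff_mem_nhds]
    rintro z ⟨hzs, hzc⟩
    have h1 : s ∈ nhds z := hopen.mem_nhds hzs
    have h2 : h ⁻¹' {c}ᶜ ∈ nhds z :=
      (hcont.continuousAt h1).preimage_mem_nhds (compl_singleton_mem_nhds hzc)
    filter_upwards [h1, h2] with w hw1 hw2
    exact ⟨hw1, hw2⟩
  have hdisj : Disjoint u v := by
    rw [Set.disjoint_left]
    rintro z ⟨hzs, hz1⟩ ⟨_, hz2⟩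
    rcases hsq z hzs with h' | h' <;> [exact hz2 h'; exact hz1 h']
  have hsub : s ⊆ u ∪ v := by
    intro z hz
    rcases hsq z hz with h' | h'
    · left; exact ⟨hz, by rw [h']; norm_num⟩
    · right; exact ⟨hz, by rw [h']; norm_num⟩
  have h0mem : (0:ℂ) ∈ s := by simp [hs]
  have hg0 : g 0 = 1 := by
    rw [hg]
    simp only
    rw [tsum_eq_single 0 (by intro n hn; simp [zero_pow hn])]
    simp [cb, Nat.centralBinom]
  have hh0 : h 0 = 1 := by
    rw [hh]; simp only
    rw [hg0, hq]
    simp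
  have hnon : (s ∩ u).Nonempty := by
    refine ⟨0, h0mem, h0mem, ?_⟩
    rw [hh0]; norm_num
  have hpre : IsPreconnected s := (convex_ball (0:ℂ) (1/8)).isPreconnected
  have hsu : s ⊆ u := IsPreconnected.subset_left_of_subset_union
    (hopen_aux (-1)) (hopen_aux 1) hdisj hsub hnon hpre
  have hx1 : h x = 1 := by
    rcases hsq x hxs with h' | h'
    · exact h'
    · exact absurd h' (hsu hxs).2
  have hx1' : g x * q x = 1 := by rw [hh] at hx1; simpa using hx1
  have hq_eq : g x = (q x)⁻¹ :=
    eq_inv_of_mul_eq_one_left hx1'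
  exact hq_eq

lemma central_hasSum {x : ℂ} (hx : ‖x‖ < 1/8) :
    HasSum (fun n => cb n * x^n) (((1 - 4*x) ^ ((1:ℂ)/2))⁻¹) := by
  have hs := (cb_summable_norm hx).of_norm
  rw [← cb_tsum_eq hx]
  exact hs.hasSum

lemma factorial_cast_ne (k : ℕ) : ((k)! : ℂ) ≠ 0 := by
  exact_mod_cast (Nat.factorial_pos k).ne'

noncomputable def scA (m n : ℕ) : ℂ :=
  ((2 * m)! * (2 * n)! : ℂ) / ((m)! * (n)! * (m + n)!)

lemma scA_left_zero (n : ℕ) : scA 0 n = cb n := by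
  rw [scA, cb, Nat.centralBinom, Nat.cast_choose ℂ (by omega : n ≤ 2*n),
    show 2*n - n = n by omega]
  simp [Nat.factorial_zero]

lemma scA_right_zero (m : ℕ) : scA m 0 = cb m := by
  rw [scA, cb, Nat.centralBinom, Nat.cast_choose ℂ (by omega : m ≤ 2*m),
    show 2*m - m = m by omega]
  simp [Nat.factorial_zero]

lemma scA_rec (m n : ℕ) : scA (m+1) n + scA m (n+1) = 4 * scA m n := by
  have e1 : ((2*(m+1))! : ℂ) = (2*(m:ℂ)+2) * (2*(m:ℂ)+1) * (2*m)! := by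
    rw [show 2*(m+1) = (2*m+1)+1 by ring, Nat.factorial_succ, Nat.factorial_succ]
    push_cast; ring
  have e2 : ((2*(n+1))! : ℂ) = (2*(n:ℂ)+2) * (2*(n:ℂ)+1) * (2*n)! := by
    rw [show 2*(n+1) = (2*n+1)+1 by ring, Nat.factorial_succ, Nat.factorial_succ]
    push_cast; ring
  have e3 : ((m+1)! : ℂ) = ((m:ℂ)+1) * (m)! := by rw [Nat.factorial_succ]; push_cast; ring
  have e4 : ((n+1)! : ℂ) = ((n:ℂ)+1) * (n)! := by rw [Nat.factorial_succ]; push_cast; ring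
  have e5 : ((m+1+n)! : ℂ) = ((m:ℂ)+(n:ℂ)+1) * (m+n)! := by
    rw [show m+1+n = (m+n)+1 by ring, Nat.factorial_succ]; push_cast; ring
  have e6 : ((m+(n+1))! : ℂ) = ((m:ℂ)+(n:ℂ)+1) * (m+n)! := by
    rw [show m+(n+1) = (m+n)+1 by ring, Nat.factorial_succ]; push_cast; ring
  have h1 := factorial_cast_ne m
  have h2 := factorial_cast_ne n
  have h3 := factorial_cast_ne (m+n)
  have h4 : ((m:ℂ)+1) ≠ 0 := Nat.cast_add_one_ne_zero (R := ℂ) m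
  have h5 : ((n:ℂ)+1) ≠ 0 := Nat.cast_add_one_ne_zero (R := ℂ) n
  have h6 : ((m:ℂ)+(n:ℂ)+1) ≠ 0 := by
    have h := Nat.cast_add_one_ne_zero (R := ℂ) (m+n)
    push_cast at h
    exact h
  have hA : scA (m+1) n = (2*(2*(m:ℂ)+1)/((m:ℂ)+(n:ℂ)+1)) * scA m n := by
    rw [scA, scA, e1, e3, e5, div_mul_div_comm, div_eq_div_iff
      (by apply_rules [mul_ne_zero]) (by apply_rules [mul_ne_zero])]
    ring
  have hB : scA m (n+1) = (2*(2*(n:ℂ)+1)/((m:ℂ)+(n:ℂ)+1)) * scA m n := by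
    rw [scA, scA, e2, e4, e6, div_mul_div_comm, div_eq_div_iff
      (by apply_rules [mul_ne_zero]) (by apply_rules [mul_ne_zero])]
    ring
  rw [hA, hB, ← add_mul, ← add_div]
  congr 1
  rw [div_eq_iff h6]
  ring

lemma scA_nat_le (m n : ℕ) :
    (2*m)! * (2*n)! ≤ 4^m * 4^n * ((m)! * (n)! * (m+n)!) := by
  have hm : (2*m)! = Nat.centralBinom m * ((m)! * (m)!) := by
    rw [Nat.centralBinom]
    have := Nat.choose_mul_factorial_mul_factorial (by omega : m ≤ 2*m)
    rw [show 2*m - m = m by omega] at this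
    rw [← this]; ring
  have hn : (2*n)! = Nat.centralBinom n * ((n)! * (n)!) := by
    rw [Nat.centralBinom]
    have := Nat.choose_mul_factorial_mul_factorial (by omega : n ≤ 2*n)
    rw [show 2*n - n = n by omega] at this
    rw [← this]; ring
  have hcb_m : Nat.centralBinom m ≤ 4^m := by
    calc Nat.centralBinom m ≤ ∑ i ∈ Finset.range (2*m+1), (2*m).choose i :=
          Finset.single_le_sum (f := fun i => (2*m).choose i) (fun i _ => Nat.zero_le _)
            (Finset.mem_range.2 (by omega))
    _ = 2^(2*m) := Nat.sum_range_choose (2*m)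
    _ = 4^m := by rw [pow_mul]; norm_num
  have hcb_n : Nat.centralBinom n ≤ 4^n := by
    calc Nat.centralBinom n ≤ ∑ i ∈ Finset.range (2*n+1), (2*n).choose i :=
          Finset.single_le_sum (f := fun i => (2*n).choose i) (fun i _ => Nat.zero_le _)
            (Finset.mem_range.2 (by omega))
    _ = 2^(2*n) := Nat.sum_range_choose (2*n)
    _ = 4^n := by rw [pow_mul]; norm_num
  have hfac : (m)! * (n)! ≤ (m+n)! :=
    Nat.le_of_dvd (Nat.factorial_pos _) (Nat.factorial_mul_factorial_dvd_factorial_add m n)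
  calc (2*m)! * (2*n)! = (Nat.centralBinom m * Nat.centralBinom n) * (((m)! * (n)!) * ((m)! * (n)!)) := by
        rw [hm, hn]; ring
  _ ≤ (4^m * 4^n) * (((m)! * (n)!) * (m+n)!) := by
      apply Nat.mul_le_mul
      · exact Nat.mul_le_mul hcb_m hcb_n
      · exact Nat.mul_le_mul_left _ hfac
  _ = 4^m * 4^n * ((m)! * (n)! * (m+n)!) := by ring

lemma scA_norm_le (m n : ℕ) : ‖scA m n‖ ≤ 4^m * 4^n := by
  rw [scA, norm_div, norm_mul, norm_mul, norm_mul]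
  simp only [Complex.norm_natCast]
  rw [div_le_iff₀ (by positivity)]
  have := scA_nat_le m n
  calc ((2*m)! : ℝ) * ((2*n)! : ℝ) = (((2*m)! * (2*n)! : ℕ) : ℝ) := by push_cast; ring
  _ ≤ ((4^m * 4^n * ((m)! * (n)! * (m+n)!) : ℕ) : ℝ) := by exact_mod_cast this
  _ = 4^m * 4^n * (((m)! : ℝ) * ((n)! : ℝ) * ((m+n)! : ℝ)) := by push_cast; ring


lemma scA_summable {x y : ℂ} (hx : ‖x‖ < 1/8) (hy : ‖y‖ < 1/8) :
    Summable (fun mn : ℕ × ℕ => scA mn.1 mn.2 * x ^ mn.1 * y ^ mn.2) := by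
  apply Summable.of_norm
  have hgeo : Summable (fun mn : ℕ × ℕ => (4*‖x‖)^mn.1 * (4*‖y‖)^mn.2) := by
    apply Summable.mul_of_nonneg
    · exact summable_geometric_of_lt_one (by positivity) (by nlinarith [norm_nonneg x])
    · exact summable_geometric_of_lt_one (by positivity) (by nlinarith [norm_nonneg y])
    · intro m; positivity
    · intro n; positivity
  refine hgeo.of_nonneg_of_le (fun _ => norm_nonneg _) (fun mn => ?_)
  rw [norm_mul, norm_mul, norm_pow, norm_pow, mul_pow, mul_pow]
  calc ‖scA mn.1 mn.2‖ * ‖x‖^mn.1 * ‖y‖^mn.2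
      ≤ (4^mn.1 * 4^mn.2) * ‖x‖^mn.1 * ‖y‖^mn.2 := by
        apply mul_le_mul_of_nonneg_right (mul_le_mul_of_nonneg_right (scA_norm_le _ _)
          (by positivity)) (by positivity)
  _ = 4^mn.1 * ‖x‖^mn.1 * (4^mn.2 * ‖y‖^mn.2) := by ring

lemma shift_hasSum_left {f : ℕ × ℕ → ℂ} {a : ℂ}
    (h : HasSum (fun mn : ℕ × ℕ => f (mn.1 + 1, mn.2)) a)
    (h0 : ∀ n, f (0, n) = 0) : HasSum f a := by
  have hinj : Function.Injective (fun mn : ℕ × ℕ => (mn.1 + 1, mn.2)) := by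
    rintro ⟨a1, a2⟩ ⟨b1, b2⟩ hab
    simp only [Prod.mk.injEq] at hab
    exact Prod.ext (by omega) hab.2
  have hvan : ∀ c ∉ Set.range (fun mn : ℕ × ℕ => (mn.1 + 1, mn.2)), f c = 0 := by
    rintro ⟨c1, c2⟩ hc
    match c1 with
    | 0 => exact h0 c2
    | k+1 => exact absurd ⟨(k, c2), rfl⟩ hc
  exact (Function.Injective.hasSum_iff hinj hvan).1 h

lemma shift_hasSum_right {f : ℕ × ℕ → ℂ} {a : ℂ}
    (h : HasSum (fun mn : ℕ × ℕ => f (mn.1, mn.2 + 1)) a)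
    (h0 : ∀ m, f (m, 0) = 0) : HasSum f a := by
  have hinj : Function.Injective (fun mn : ℕ × ℕ => (mn.1, mn.2 + 1)) := by
    rintro ⟨a1, a2⟩ ⟨b1, b2⟩ hab
    simp only [Prod.mk.injEq] at hab
    exact Prod.ext hab.1 (by omega)
  have hvan : ∀ c ∉ Set.range (fun mn : ℕ × ℕ => (mn.1, mn.2 + 1)), f c = 0 := by
    rintro ⟨c1, c2⟩ hc
    match c2 with
    | 0 => exact h0 c1
    | k+1 => exact absurd ⟨(c1, k), rfl⟩ hc
  exact (Function.Injective.hasSum_iff hinj hvan).1 h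

lemma shift_hasSum_both {f : ℕ × ℕ → ℂ} {a : ℂ}
    (h : HasSum (fun mn : ℕ × ℕ => f (mn.1 + 1, mn.2 + 1)) a)
    (h0 : ∀ n, f (0, n) = 0) (h0' : ∀ m, f (m, 0) = 0) : HasSum f a := by
  have hinj : Function.Injective (fun mn : ℕ × ℕ => (mn.1 + 1, mn.2 + 1)) := by
    rintro ⟨a1, a2⟩ ⟨b1, b2⟩ hab
    simp only [Prod.mk.injEq] at hab
    exact Prod.ext (by omega) (by omega)
  have hvan : ∀ c ∉ Set.range (fun mn : ℕ × ℕ => (mn.1 + 1, mn.2 + 1)), f c = 0 := by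
    rintro ⟨c1, c2⟩ hc
    match c1, c2 with
    | 0, c2 => exact h0 c2
    | k+1, 0 => exact h0' (k+1)
    | k+1, l+1 => exact absurd ⟨(k, l), rfl⟩ hc
  exact (Function.Injective.hasSum_iff hinj hvan).1 h

lemma axis_hasSum_left {g : ℕ → ℂ} {a : ℂ} (h : HasSum g a) :
    HasSum (fun mn : ℕ × ℕ => if mn.2 = 0 then g mn.1 else 0) a := by
  have hinj : Function.Injective (fun m : ℕ => (m, 0) : ℕ → ℕ × ℕ) := by
    intro a b hab; simpa using hab
  have hvan : ∀ c ∉ Set.range (fun m : ℕ => ((m, 0) : ℕ × ℕ)),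
      (if c.2 = 0 then g c.1 else 0) = 0 := by
    rintro ⟨c1, c2⟩ hc
    match c2 with
    | 0 => exact absurd ⟨c1, rfl⟩ hc
    | k+1 => simp
  refine (Function.Injective.hasSum_iff hinj hvan).1 ?_
  simpa [Function.comp_def] using h

lemma axis_hasSum_right {g : ℕ → ℂ} {a : ℂ} (h : HasSum g a) :
    HasSum (fun mn : ℕ × ℕ => if mn.1 = 0 then g mn.2 else 0) a := by
  have hinj : Function.Injective (fun n : ℕ => (0, n) : ℕ → ℕ × ℕ) := by
    intro a b hab; simpa using hab
  have hvan : ∀ c ∉ Set.range (fun n : ℕ => ((0, n) : ℕ × ℕ)),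
      (if c.1 = 0 then g c.2 else 0) = 0 := by
    rintro ⟨c1, c2⟩ hc
    match c1 with
    | 0 => exact absurd ⟨c2, rfl⟩ hc
    | k+1 => simp
  refine (Function.Injective.hasSum_iff hinj hvan).1 ?_
  simpa [Function.comp_def] using h

lemma alpha_hasSum {x : ℂ} (hx : ‖x‖ < 1/8) :
    HasSum (fun m : ℕ => if m = 0 then 0 else cb (m-1) * x^m)
      (x * ((1 - 4*x) ^ ((1:ℂ)/2))⁻¹) := by
  have hinj : Function.Injective (fun m : ℕ => m + 1) := fun a b h => by simpa using h
  have hvan : ∀ c ∉ Set.range (fun m : ℕ => m + 1),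
      (if c = 0 then 0 else cb (c-1) * x^c) = 0 := by
    intro c hc
    match c with
    | 0 => simp
    | k+1 => exact absurd ⟨k, rfl⟩ hc
  refine (Function.Injective.hasSum_iff hinj hvan).1 ?_
  convert (central_hasSum hx).mul_left x using 1
  · rfl
  funext m
  simp only [Function.comp]
  rw [if_neg (Nat.succ_ne_zero m), Nat.add_sub_cancel, pow_succ]
  ring

set_option maxHeartbeats 1000000 in
lemma scA_main {x y : ℂ} (hx : ‖x‖ < 1/8) (hy : ‖y‖ < 1/8)
    (hxy : x + y - 4*x*y ≠ 0) :
    HasSum (fun mn : ℕ × ℕ => scA mn.1 mn.2 * x ^ mn.1 * y ^ mn.2)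
      ((1/(x + y - 4*x*y)) *
        (x * ((1 - 4*x) ^ ((1:ℂ)/2))⁻¹ + y * ((1 - 4*y) ^ ((1:ℂ)/2))⁻¹)) := by
  obtain ⟨S, hS⟩ := scA_summable hx hy
  -- shifted sums
  have hψS : HasSum (fun mn : ℕ × ℕ =>
      if mn.1 = 0 then 0 else scA (mn.1-1) mn.2 * x^mn.1 * y^mn.2) (x * S) := by
    apply shift_hasSum_left (f := fun mn : ℕ × ℕ =>
      if mn.1 = 0 then 0 else scA (mn.1-1) mn.2 * x^mn.1 * y^mn.2)
    · have h1 : (fun mn : ℕ × ℕ =>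
          if mn.1+1 = 0 then 0 else scA (mn.1+1-1) mn.2 * x^(mn.1+1) * y^mn.2)
          = fun mn : ℕ × ℕ => x * (scA mn.1 mn.2 * x^mn.1 * y^mn.2) := by
        funext mn
        rw [if_neg (Nat.succ_ne_zero _), Nat.add_sub_cancel, pow_succ]
        ring
      exact h1 ▸ hS.mul_left x
    · intro n; simp
  have hχS : HasSum (fun mn : ℕ × ℕ =>
      if mn.2 = 0 then 0 else scA mn.1 (mn.2-1) * x^mn.1 * y^mn.2) (y * S) := by
    apply shift_hasSum_right (f := fun mn : ℕ × ℕ =>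
      if mn.2 = 0 then 0 else scA mn.1 (mn.2-1) * x^mn.1 * y^mn.2)
    · have h1 : (fun mn : ℕ × ℕ =>
          if mn.2+1 = 0 then 0 else scA mn.1 (mn.2+1-1) * x^mn.1 * y^(mn.2+1))
          = fun mn : ℕ × ℕ => y * (scA mn.1 mn.2 * x^mn.1 * y^mn.2) := by
        funext mn
        rw [if_neg (Nat.succ_ne_zero _), Nat.add_sub_cancel, pow_succ]
        ring
      exact h1 ▸ hS.mul_left y
    · intro m; simp
  have hωS : HasSum (fun mn : ℕ × ℕ =>
      if mn.1 = 0 ∨ mn.2 = 0 then 0 else 4 * scA (mn.1-1) (mn.2-1) * x^mn.1 * y^mn.2)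
      (4*x*y * S) := by
    apply shift_hasSum_both (f := fun mn : ℕ × ℕ =>
      if mn.1 = 0 ∨ mn.2 = 0 then 0 else 4 * scA (mn.1-1) (mn.2-1) * x^mn.1 * y^mn.2)
    · have h1 : (fun mn : ℕ × ℕ =>
          if mn.1+1 = 0 ∨ mn.2+1 = 0 then 0
          else 4 * scA (mn.1+1-1) (mn.2+1-1) * x^(mn.1+1) * y^(mn.2+1))
          = fun mn : ℕ × ℕ => (4*x*y) * (scA mn.1 mn.2 * x^mn.1 * y^mn.2) := by
        funext mn
        rw [if_neg (by simp), Nat.add_sub_cancel, Nat.add_sub_cancel, pow_succ, pow_succ]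
        ring
      exact h1 ▸ hS.mul_left (4*x*y)
    · intro n; simp
    · intro m; simp
  -- boundary sums
  have hβx : HasSum (fun mn : ℕ × ℕ =>
      if mn.2 = 0 then (if mn.1 = 0 then 0 else cb (mn.1-1) * x^mn.1) else 0)
      (x * ((1 - 4*x) ^ ((1:ℂ)/2))⁻¹) := axis_hasSum_left (alpha_hasSum hx)
  have hβy : HasSum (fun mn : ℕ × ℕ =>
      if mn.1 = 0 then (if mn.2 = 0 then 0 else cb (mn.2-1) * y^mn.2) else 0)
      (y * ((1 - 4*y) ^ ((1:ℂ)/2))⁻¹) := axis_hasSum_right (alpha_hasSum hy)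
  -- pointwise identity
  have hpt : ∀ mn : ℕ × ℕ,
      ((if mn.1 = 0 then 0 else scA (mn.1-1) mn.2 * x^mn.1 * y^mn.2) +
        (if mn.2 = 0 then 0 else scA mn.1 (mn.2-1) * x^mn.1 * y^mn.2) -
        (if mn.1 = 0 ∨ mn.2 = 0 then 0 else 4 * scA (mn.1-1) (mn.2-1) * x^mn.1 * y^mn.2))
      = ((if mn.2 = 0 then (if mn.1 = 0 then 0 else cb (mn.1-1) * x^mn.1) else 0) +
          (if mn.1 = 0 then (if mn.2 = 0 then 0 else cb (mn.2-1) * y^mn.2) else 0)) := by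
    rintro ⟨m, n⟩
    match m, n with
    | 0, 0 => simp
    | m+1, 0 =>
      simp only [Nat.succ_ne_zero, if_neg, if_pos, Nat.add_sub_cancel]
      simp [scA_right_zero]
    | 0, n+1 =>
      simp only [Nat.succ_ne_zero, if_neg, if_pos, Nat.add_sub_cancel]
      simp [scA_left_zero]
    | m+1, n+1 =>
      simp only [Nat.succ_ne_zero, Nat.add_sub_cancel, if_neg, or_self, if_false]
      have hrec := scA_rec m n
      linear_combination (x^(m+1) * y^(n+1)) * hrec
  have hcomb := (hψS.add hχS).sub hωS
  have hfun : (fun mn : ℕ × ℕ =>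
      ((if mn.1 = 0 then 0 else scA (mn.1-1) mn.2 * x^mn.1 * y^mn.2) +
        (if mn.2 = 0 then 0 else scA mn.1 (mn.2-1) * x^mn.1 * y^mn.2) -
        (if mn.1 = 0 ∨ mn.2 = 0 then 0 else 4 * scA (mn.1-1) (mn.2-1) * x^mn.1 * y^mn.2)))
      = (fun mn : ℕ × ℕ =>
        ((if mn.2 = 0 then (if mn.1 = 0 then 0 else cb (mn.1-1) * x^mn.1) else 0) +
          (if mn.1 = 0 then (if mn.2 = 0 then 0 else cb (mn.2-1) * y^mn.2) else 0))) :=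
    funext hpt
  rw [hfun] at hcomb
  have hval := hcomb.unique (hβx.add hβy)
  have hSval : S = (1/(x + y - 4*x*y)) *
      (x * ((1 - 4*x) ^ ((1:ℂ)/2))⁻¹ + y * ((1 - 4*y) ^ ((1:ℂ)/2))⁻¹) := by
    rw [← hval]
    rw [show x * S + y * S - 4 * x * y * S = (x + y - 4*x*y) * S by ring, one_div, inv_mul_cancel_left₀ hxy]
  exact hSval ▸ hS

noncomputable def scP : MvPolynomial (Fin 3) ℂ :=
  (MvPolynomial.X 0 + MvPolynomial.X 1 - 4 * MvPolynomial.X 0 * MvPolynomial.X 1) *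
    (((1 - 4 * MvPolynomial.X 0) * (1 - 4 * MvPolynomial.X 1) *
        ((MvPolynomial.X 0 + MvPolynomial.X 1 - 4 * MvPolynomial.X 0 * MvPolynomial.X 1) *
          MvPolynomial.X 2) ^ 2 -
      (1 - 4 * MvPolynomial.X 1) * MvPolynomial.X 0 ^ 2 -
      (1 - 4 * MvPolynomial.X 0) * MvPolynomial.X 1 ^ 2) ^ 2 -
    4 * MvPolynomial.X 0 ^ 2 * MvPolynomial.X 1 ^ 2 * (1 - 4 * MvPolynomial.X 0) *
      (1 - 4 * MvPolynomial.X 1))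

lemma scP_eval (x y u : ℂ) :
    MvPolynomial.eval ![x, y, u] scP =
      (x + y - 4*x*y) *
        (((1 - 4*x) * (1 - 4*y) * ((x + y - 4*x*y) * u)^2
            - (1 - 4*y) * x^2 - (1 - 4*x) * y^2)^2
          - 4 * x^2 * y^2 * (1 - 4*x) * (1 - 4*y)) := by
  simp [scP, map_mul, map_add, map_sub, map_pow, map_ofNat, MvPolynomial.eval_X]

lemma scP_ne : scP ≠ 0 := by
  intro h0
  have h1 : MvPolynomial.eval ![(1:ℂ),1,1] scP = -3456 := by
    rw [scP_eval]; norm_num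
  rw [h0] at h1
  simp at h1

theorem super_catalan_generating_function :
    ∃ ε > (0 : ℝ),
      (∀ x y : ℂ, ‖x‖ < ε → ‖y‖ < ε → x + y - 4 * x * y ≠ 0 →
        HasSum (fun mn : ℕ × ℕ =>
            (((2 * mn.1)! * (2 * mn.2)! : ℂ) / ((mn.1)! * (mn.2)! * (mn.1 + mn.2)!)) *
              x ^ mn.1 * y ^ mn.2)
          ((1 / (x + y - 4 * x * y)) *
            (x / (1 - 4 * x) ^ ((1 : ℂ) / 2) + y / (1 - 4 * y) ^ ((1 : ℂ) / 2)))) ∧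
      ∃ P : MvPolynomial (Fin 3) ℂ, P ≠ 0 ∧
        ∀ x y : ℂ, ‖x‖ < ε → ‖y‖ < ε →
          MvPolynomial.eval
            ![x, y, ∑' mn : ℕ × ℕ,
              (((2 * mn.1)! * (2 * mn.2)! : ℂ) / ((mn.1)! * (mn.2)! * (mn.1 + mn.2)!)) *
                x ^ mn.1 * y ^ mn.2] P = 0 := by
  refine ⟨1/8, by norm_num, ?_, scP, scP_ne, ?_⟩
  · intro x y hx hy hxy
    have h := scA_main hx hy hxy
    rw [← div_eq_mul_inv, ← div_eq_mul_inv] at h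
    exact h
  · intro x y hx hy
    rw [show (∑' mn : ℕ × ℕ,
          (((2 * mn.1)! * (2 * mn.2)! : ℂ) / ((mn.1)! * (mn.2)! * (mn.1 + mn.2)!)) *
            x ^ mn.1 * y ^ mn.2)
        = ∑' mn : ℕ × ℕ, scA mn.1 mn.2 * x ^ mn.1 * y ^ mn.2 from rfl]
    set u := ∑' mn : ℕ × ℕ, scA mn.1 mn.2 * x ^ mn.1 * y ^ mn.2 with hu
    rw [scP_eval x y u]
    by_cases hxy : x + y - 4*x*y = 0
    · rw [hxy]; ring
    · have hval : u = (1/(x + y - 4*x*y)) *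
          (x * ((1 - 4*x) ^ ((1:ℂ)/2))⁻¹ + y * ((1 - 4*y) ^ ((1:ℂ)/2))⁻¹) :=
        (scA_main hx hy hxy).tsum_eq
      set a := x * ((1 - 4*x) ^ ((1:ℂ)/2))⁻¹ with hadef
      set b := y * ((1 - 4*y) ^ ((1:ℂ)/2))⁻¹ with hbdef
      have hne_x : (1 - 4*x) ≠ 0 := by
        intro h0
        rw [sub_eq_zero] at h0
        have h1 : ‖(4:ℂ)*x‖ = 1 := by rw [← h0]; simp
        rw [norm_mul] at h1
        simp only [Complex.norm_ofNat] at h1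
        nlinarith [norm_nonneg x]
      have hne_y : (1 - 4*y) ≠ 0 := by
        intro h0
        rw [sub_eq_zero] at h0
        have h1 : ‖(4:ℂ)*y‖ = 1 := by rw [← h0]; simp
        rw [norm_mul] at h1
        simp only [Complex.norm_ofNat] at h1
        nlinarith [norm_nonneg y]
      have hqx2 : ((1 - 4*x) ^ ((1:ℂ)/2))^2 = 1 - 4*x := by
        rw [sq, ← Complex.cpow_add _ _ hne_x]
        norm_num
      have hqy2 : ((1 - 4*y) ^ ((1:ℂ)/2))^2 = 1 - 4*y := by
        rw [sq, ← Complex.cpow_add _ _ hne_y]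
        norm_num
      have hqx_ne : ((1 - 4*x) ^ ((1:ℂ)/2)) ≠ 0 := by
        intro h0
        rw [h0] at hqx2
        simp at hqx2
        exact hne_x hqx2.symm
      have hqy_ne : ((1 - 4*y) ^ ((1:ℂ)/2)) ≠ 0 := by
        intro h0
        rw [h0] at hqy2
        simp at hqy2
        exact hne_y hqy2.symm
      have ha : (1 - 4*x) * a^2 = x^2 := by
        rw [hadef, mul_pow, inv_pow, hqx2]
        field_simp
      have hb : (1 - 4*y) * b^2 = y^2 := by
        rw [hbdef, mul_pow, inv_pow, hqy2]
        field_simp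
      have hw : (x + y - 4*x*y) * u = a + b := by
        rw [hval]
        rw [one_div, ← mul_assoc, mul_inv_cancel₀ hxy, one_mul]
      have hI : (1 - 4*x) * (1 - 4*y) * ((x + y - 4*x*y) * u)^2
            - (1 - 4*y) * x^2 - (1 - 4*x) * y^2
          = 2*(1 - 4*x)*(1 - 4*y)*a*b := by
        rw [hw]
        linear_combination (1 - 4*y)*ha + (1 - 4*x)*hb
      rw [show x + y - 4 * x * y = x + y - 4*x*y by ring] at *
      rw [hI]
      linear_combination (x + y - 4*x*y) *
        ((4*(1 - 4*x)*(1 - 4*y)*(1 - 4*y)*b^2) * ha + (4*(1 - 4*x)*(1 - 4*y)*x^2) * hb)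
end

section
/- The generating function identity (1−xy)/(1 − xy² − 3xy − x²y) = ∑ binom(m+n, 2m−n) x^m y^n holds, where the sum is over all (m,n) ∈ ℕ² with 2m ≥ n and 2n ≥ m, i.e., over the lattice points of the cone {2m−n ≥ 0, 2n−m ≥ 0}. -/
def cfn (m n : ℕ) : ℕ := if 2*m ≥ n ∧ 2*n ≥ m then (m+n).choose (2*m - n) else 0

lemma pascal3 (M i : ℕ) :
    (M+3).choose (i+3) = M.choose (i+3) + 3 * (M+1).choose (i+2) + M.choose i := by
  simp only [show M+3 = (M+2)+1 from rfl, show M+2 = (M+1)+1 from rfl,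
    show i+3 = (i+2)+1 from rfl, show i+2 = (i+1)+1 from rfl,
    Nat.choose_succ_succ]
  ring

lemma pascal2 (M : ℕ) : (M+3).choose 2 = M.choose 2 + 3*(M+1) := by
  simp only [show M+3 = (M+2)+1 from rfl, show M+2 = (M+1)+1 from rfl,
    show (2:ℕ) = 1+1 from rfl, Nat.choose_succ_succ, Nat.choose_one_right, Nat.choose_zero_right]
  ring_nf

lemma key_main (m n : ℕ) :
    cfn (m+2) (n+2) = cfn (m+1) n + 3 * cfn (m+1) (n+1) + cfn m (n+1) := by
  unfold cfn
  by_cases h1 : n ≤ 2*m + 2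
  · by_cases h2 : m ≤ 2*n + 2
    · -- in cone
      rcases Nat.lt_or_ge n (2*m) with hn | hn
      · -- j ≥ 3
        rcases Nat.lt_or_ge m (2*n) with hm | hm
        · -- generic case
          obtain ⟨i, hi⟩ : ∃ i, 2*m = n + i + 1 := ⟨2*m - n - 1, by omega⟩
          rw [if_pos (by omega), if_pos (by omega), if_pos (by omega), if_pos (by omega)]
          rw [show 2*(m+2) - (n+2) = i+3 by omega, show 2*(m+1) - n = i+3 by omega,
            show 2*(m+1) - (n+1) = i+2 by omega, show 2*m - (n+1) = i by omega,
            show m+2+(n+2) = (m+n+1)+3 by ring, show m+1+n = m+n+1 by ring,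
            show m+1+(n+1) = (m+n+1)+1 by ring, show m+(n+1) = m+n+1 by ring]
          exact pascal3 (m+n+1) i
        · rcases (by omega : m = 2*n ∨ m = 2*n+1 ∨ m = 2*n+2) with rfl | rfl | rfl
          · -- m = 2n, n ≥ 1
            have hn1 : 1 ≤ n := by omega
            rw [if_pos (by omega), if_neg (by omega), if_pos (by omega), if_pos (by omega)]
            rw [show 2*(2*n+2) - (n+2) = 3*n+2 by omega, show 2*n+2+(n+2) = 3*n+4 by ring,
              show 2*(2*n+1) - (n+1) = 3*n+1 by omega, show 2*n+1+(n+1) = 3*n+2 by ring,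
              show 2*(2*n) - (n+1) = 3*n-1 by omega, show 2*n+(n+1) = 3*n+1 by ring]
            have e1 : (3*n+4).choose (3*n+2) = (3*n+4).choose 2 := by
              have h := Nat.choose_symm (n := 3*n+4) (k := 2) (by omega)
              rwa [show 3*n+4-2 = 3*n+2 by omega] at h
            have e2 : (3*n+2).choose (3*n+1) = 3*n+2 := by
              have h := Nat.choose_symm (n := 3*n+2) (k := 1) (by omega)
              rwa [show 3*n+2-1 = 3*n+1 by omega, Nat.choose_one_right] at h
            have e3 : (3*n+1).choose (3*n-1) = (3*n+1).choose 2 := by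
              have h := Nat.choose_symm (n := 3*n+1) (k := 2) (by omega)
              rwa [show 3*n+1-2 = 3*n-1 by omega] at h
            rw [e1, e2, e3, show 3*n+4 = (3*n+1)+3 by ring, pascal2 (3*n+1)]
            omega
          · -- m = 2n+1
            rw [if_pos (by omega), if_neg (by omega), if_pos (by omega), if_pos (by omega)]
            rw [show 2*(2*n+1+2) - (n+2) = 3*n+4 by omega, show 2*n+1+2+(n+2) = 3*n+5 by ring,
              show 2*(2*n+1+1) - (n+1) = 3*n+3 by omega, show 2*n+1+1+(n+1) = 3*n+3 by ring,
              show 2*(2*n+1) - (n+1) = 3*n+1 by omega, show 2*n+1+(n+1) = 3*n+2 by ring]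
            have e1 : (3*n+5).choose (3*n+4) = 3*n+5 := by
              have h := Nat.choose_symm (n := 3*n+5) (k := 1) (by omega)
              rwa [show 3*n+5-1 = 3*n+4 by omega, Nat.choose_one_right] at h
            have e2 : (3*n+2).choose (3*n+1) = 3*n+2 := by
              have h := Nat.choose_symm (n := 3*n+2) (k := 1) (by omega)
              rwa [show 3*n+2-1 = 3*n+1 by omega, Nat.choose_one_right] at h
            rw [e1, e2, Nat.choose_self]
            omega
          · -- m = 2n+2
            rw [if_pos (by omega), if_neg (by omega), if_neg (by omega), if_pos (by omega)]
            rw [show 2*(2*n+2+2) - (n+2) = 3*n+6 by omega, show 2*n+2+2+(n+2) = 3*n+6 by ring,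
              show 2*(2*n+2) - (n+1) = 3*n+3 by omega, show 2*n+2+(n+1) = 3*n+3 by ring,
              Nat.choose_self, Nat.choose_self]
      · rcases (by omega : n = 2*m ∨ n = 2*m+1 ∨ n = 2*m+2) with rfl | rfl | rfl
        · -- n = 2m
          by_cases hm0 : m = 0
          · subst hm0; decide
          rw [if_pos (by omega), if_pos (by omega), if_pos (by omega), if_neg (by omega)]
          rw [show 2*(m+2) - (2*m+2) = 2 by omega, show m+2+(2*m+2) = (3*m+1)+3 by ring,
            show 2*(m+1) - (2*m) = 2 by omega, show m+1+2*m = 3*m+1 by ring,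
            show 2*(m+1) - (2*m+1) = 1 by omega, show m+1+(2*m+1) = 3*m+2 by ring,
            Nat.choose_one_right, pascal2 (3*m+1)]
          omega
        · -- n = 2m+1
          rw [if_pos (by omega), if_pos (by omega), if_pos (by omega), if_neg (by omega)]
          rw [show 2*(m+2) - (2*m+1+2) = 1 by omega, show m+2+(2*m+1+2) = 3*m+5 by ring,
            show 2*(m+1) - (2*m+1) = 1 by omega, show m+1+(2*m+1) = 3*m+2 by ring,
            show 2*(m+1) - (2*m+1+1) = 0 by omega, show m+1+(2*m+1+1) = 3*m+3 by ring,
            Nat.choose_one_right, Nat.choose_one_right, Nat.choose_zero_right]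
        · -- n = 2m+2
          rw [if_pos (by omega), if_pos (by omega), if_neg (by omega), if_neg (by omega)]
          rw [show 2*(m+2) - (2*m+2+2) = 0 by omega, show 2*(m+1) - (2*m+2) = 0 by omega,
            Nat.choose_zero_right, Nat.choose_zero_right]
    · rw [if_neg (by omega), if_neg (by omega), if_neg (by omega), if_neg (by omega)]
  · rw [if_neg (by omega), if_neg (by omega), if_neg (by omega), if_neg (by omega)]



lemma choose_le_two_pow' (n k : ℕ) : n.choose k ≤ 2 ^ n := by
  rcases le_or_gt k n with h | h
  · calc n.choose k ≤ ∑ m ∈ Finset.range (n+1), n.choose m :=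
        Finset.single_le_sum (fun i _ => Nat.zero_le _) (Finset.mem_range.mpr (Nat.lt_succ_of_le h))
    _ = 2 ^ n := Nat.sum_range_choose n
  · simp [Nat.choose_eq_zero_of_lt h]

lemma cfn_le (m n : ℕ) : cfn m n ≤ 2 ^ (m + n) := by
  unfold cfn; split
  · exact choose_le_two_pow' _ _
  · exact Nat.zero_le _

lemma hasSum_shift {x y S : ℂ} {c : ℕ → ℕ → ℂ} (a b : ℕ)
    (h : HasSum (fun p : ℕ × ℕ => c p.1 p.2 * x ^ p.1 * y ^ p.2) S) :
    HasSum (fun p : ℕ × ℕ =>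
        (if a ≤ p.1 ∧ b ≤ p.2 then c (p.1 - a) (p.2 - b) else 0) * x ^ p.1 * y ^ p.2)
      (x ^ a * y ^ b * S) := by
  have he : Function.Injective (fun p : ℕ × ℕ => (p.1 + a, p.2 + b)) := by
    intro p q hpq
    simp only [Prod.mk.injEq] at hpq
    exact Prod.ext (by omega) (by omega)
  rw [← Function.Injective.hasSum_iff he ?_]
  · have h' := h.mul_left (x ^ a * y ^ b)
    convert h' using 1
    · rfl
    funext p
    simp only [Function.comp_apply]
    rw [if_pos ⟨Nat.le_add_left _ _, Nat.le_add_left _ _⟩, Nat.add_sub_cancel,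
      Nat.add_sub_cancel]
    ring
  · rintro ⟨p1, p2⟩ hp
    have hng : ¬(a ≤ p1 ∧ b ≤ p2) := by
      intro hab
      refine hp ⟨(p1 - a, p2 - b), ?_⟩
      simp only [Prod.mk.injEq]
      exact ⟨by omega, by omega⟩
    simp [hng]

set_option maxHeartbeats 1000000 in
lemma key (m n : ℕ) :
    cfn m n + (if m = 1 ∧ n = 1 then 1 else 0)
      = (if 1 ≤ m ∧ 2 ≤ n then cfn (m-1) (n-2) else 0)
        + 3 * (if 1 ≤ m ∧ 1 ≤ n then cfn (m-1) (n-1) else 0)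
        + (if 2 ≤ m ∧ 1 ≤ n then cfn (m-2) (n-1) else 0)
        + (if m = 0 ∧ n = 0 then 1 else 0) := by
  rcases m with _ | _ | m <;> rcases n with _ | _ | n
  · decide
  · decide
  · unfold cfn; split_ifs <;> simp_all <;> omega
  · decide
  · decide
  · rcases n with _ | n
    · decide
    · unfold cfn; split_ifs <;> simp_all <;> omega
  · unfold cfn; split_ifs <;> simp_all <;> omega
  · rcases m with _ | m
    · decide
    · unfold cfn; split_ifs <;> simp_all <;> omega
  · have h := key_main m n
    simp only [show m+1+1 = m+2 from rfl, show n+1+1 = n+2 from rfl]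
    rw [if_neg (by omega), if_pos (by omega), if_pos (by omega), if_pos (by omega),
      if_neg (by omega)]
    simp only [show m+2-1 = m+1 from rfl, show n+2-2 = n from rfl,
      show n+2-1 = n+1 from rfl, show m+2-2 = m from rfl]
    omega

theorem gessel_xin_cone_generating_function :
    ∃ ε > (0 : ℝ), ∀ x y : ℂ, ‖x‖ < ε → ‖y‖ < ε →
      HasSum (fun mn : ℕ × ℕ =>
          if 2 * mn.1 ≥ mn.2 ∧ 2 * mn.2 ≥ mn.1 then
            ((mn.1 + mn.2).choose (2 * mn.1 - mn.2) : ℂ) * x ^ mn.1 * y ^ mn.2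
          else 0)
        ((1 - x * y) / (1 - x * y ^ 2 - 3 * x * y - x ^ 2 * y)) := by
  refine ⟨1/8, by norm_num, ?_⟩
  intro x y hx hy
  set c : ℕ → ℕ → ℂ := fun m n => (cfn m n : ℂ) with hc
  have hFeq : (fun mn : ℕ × ℕ => if 2 * mn.1 ≥ mn.2 ∧ 2 * mn.2 ≥ mn.1 then
        ((mn.1 + mn.2).choose (2 * mn.1 - mn.2) : ℂ) * x ^ mn.1 * y ^ mn.2 else 0)
      = (fun p : ℕ × ℕ => c p.1 p.2 * x ^ p.1 * y ^ p.2) := by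
    funext p
    by_cases h : 2 * p.1 ≥ p.2 ∧ 2 * p.2 ≥ p.1 <;> simp [hc, cfn, h]
  -- summability
  have hsum : Summable (fun p : ℕ × ℕ => c p.1 p.2 * x ^ p.1 * y ^ p.2) := by
    apply Summable.of_norm_bounded (g := fun p : ℕ × ℕ => (2*‖x‖)^p.1 * (2*‖y‖)^p.2)
    · exact Summable.mul_of_nonneg
        (summable_geometric_of_lt_one (by positivity) (by linarith))
        (summable_geometric_of_lt_one (by positivity) (by linarith))
        (fun i => by positivity) (fun i => by positivity)
    · intro p
      have h1 : ‖c p.1 p.2 * x ^ p.1 * y ^ p.2‖ = (cfn p.1 p.2 : ℝ) * ‖x‖^p.1 * ‖y‖^p.2 := by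
        simp [hc, norm_mul, norm_pow]
      rw [h1]
      calc (cfn p.1 p.2 : ℝ) * ‖x‖^p.1 * ‖y‖^p.2
          ≤ (2:ℝ)^(p.1+p.2) * ‖x‖^p.1 * ‖y‖^p.2 := by
            gcongr
            exact_mod_cast cfn_le p.1 p.2
        _ = (2*‖x‖)^p.1 * (2*‖y‖)^p.2 := by rw [pow_add, mul_pow, mul_pow]; ring
  set S := ∑' p : ℕ × ℕ, c p.1 p.2 * x ^ p.1 * y ^ p.2 with hSdef
  have hFS : HasSum (fun p : ℕ × ℕ => c p.1 p.2 * x ^ p.1 * y ^ p.2) S := hsum.hasSum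
  have h1 := hasSum_shift 1 2 hFS
  have h2 := (hasSum_shift 1 1 hFS).mul_left 3
  have h3 := hasSum_shift 2 1 hFS
  have hcomb := ((hFS.sub h1).sub h2).sub h3
  -- pointwise identification with delta function
  have hptwise : (fun p : ℕ × ℕ => c p.1 p.2 * x ^ p.1 * y ^ p.2
        - (if 1 ≤ p.1 ∧ 2 ≤ p.2 then c (p.1-1) (p.2-2) else 0) * x ^ p.1 * y ^ p.2
        - 3 * ((if 1 ≤ p.1 ∧ 1 ≤ p.2 then c (p.1-1) (p.2-1) else 0) * x ^ p.1 * y ^ p.2)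
        - (if 2 ≤ p.1 ∧ 1 ≤ p.2 then c (p.1-2) (p.2-1) else 0) * x ^ p.1 * y ^ p.2)
      = (fun p : ℕ × ℕ => if p = (0,0) then (1:ℂ) else if p = (1,1) then -(x*y) else 0) := by
    funext p
    obtain ⟨m, n⟩ := p
    simp only
    have hkC : ((if 1 ≤ m ∧ 2 ≤ n then cfn (m-1) (n-2) else 0 : ℕ) : ℂ)
        + 3 * ((if 1 ≤ m ∧ 1 ≤ n then cfn (m-1) (n-1) else 0 : ℕ) : ℂ)
        + ((if 2 ≤ m ∧ 1 ≤ n then cfn (m-2) (n-1) else 0 : ℕ) : ℂ)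
        + ((if m = 0 ∧ n = 0 then 1 else 0 : ℕ) : ℂ)
        = (cfn m n : ℂ) + ((if m = 1 ∧ n = 1 then 1 else 0 : ℕ) : ℂ) := by
      exact_mod_cast congrArg (fun k : ℕ => (k : ℂ)) (key m n).symm
    have c1 : (if 1 ≤ m ∧ 2 ≤ n then c (m-1) (n-2) else 0)
        = ((if 1 ≤ m ∧ 2 ≤ n then cfn (m-1) (n-2) else 0 : ℕ) : ℂ) := by
      simp only [hc]; split_ifs <;> simp
    have c2 : (if 1 ≤ m ∧ 1 ≤ n then c (m-1) (n-1) else 0)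
        = ((if 1 ≤ m ∧ 1 ≤ n then cfn (m-1) (n-1) else 0 : ℕ) : ℂ) := by
      simp only [hc]; split_ifs <;> simp
    have c3 : (if 2 ≤ m ∧ 1 ≤ n then c (m-2) (n-1) else 0)
        = ((if 2 ≤ m ∧ 1 ≤ n then cfn (m-2) (n-1) else 0 : ℕ) : ℂ) := by
      simp only [hc]; split_ifs <;> simp
    rw [c1, c2, c3]
    have hδ : (if (m,n) = ((0,0) : ℕ × ℕ) then (1:ℂ) else if (m,n) = ((1,1) : ℕ × ℕ) then -(x*y) else 0)
        = ((if m = 0 ∧ n = 0 then 1 else 0 : ℕ) : ℂ) * (x^m*y^n)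
          - ((if m = 1 ∧ n = 1 then 1 else 0 : ℕ) : ℂ) * (x^m*y^n) := by
      by_cases h0 : m = 0 ∧ n = 0
      · obtain ⟨rfl, rfl⟩ := h0; norm_num
      · by_cases h1 : m = 1 ∧ n = 1
        · obtain ⟨rfl, rfl⟩ := h1; norm_num
        · rw [if_neg (by simp [Prod.ext_iff]; tauto), if_neg (by simp [Prod.ext_iff]; tauto),
            if_neg h0, if_neg h1]
          norm_num
    rw [hδ]
    linear_combination (-(x^m*y^n)) * hkC
  rw [hptwise] at hcomb
  -- delta function sums to 1 - x y
  have hδsum : HasSum (fun p : ℕ × ℕ => if p = (0,0) then (1:ℂ) else if p = (1,1) then -(x*y) else 0)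
      (1 - x*y) := by
    have ha := hasSum_ite_eq ((0,0) : ℕ × ℕ) (1:ℂ)
    have hb := hasSum_ite_eq ((1,1) : ℕ × ℕ) (-(x*y))
    have hab := ha.add hb
    have heq : (fun p : ℕ × ℕ => (if p = (0,0) then (1:ℂ) else 0) + (if p = (1,1) then -(x*y) else 0))
        = (fun p : ℕ × ℕ => if p = (0,0) then (1:ℂ) else if p = (1,1) then -(x*y) else 0) := by
      funext p
      by_cases h0 : p = (0,0)
      · subst h0; norm_num
      · by_cases h1 : p = (1,1)
        · subst h1; norm_num
        · rw [if_neg h0, if_neg h1, if_neg h0]; simp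
    rw [heq] at hab
    have hre : (1:ℂ) + -(x*y) = 1 - x*y := by ring
    rw [hre] at hab
    exact hab
  have hval := hcomb.unique hδsum
  -- denominator nonzero
  have hnorm : ‖x*y^2 + 3*(x*y) + x^2*y‖ < 1 := by
    calc ‖x*y^2 + 3*(x*y) + x^2*y‖ ≤ ‖x*y^2‖ + ‖3*(x*y)‖ + ‖x^2*y‖ := norm_add₃_le
      _ = ‖x‖*‖y‖^2 + 3*(‖x‖*‖y‖) + ‖x‖^2*‖y‖ := by
          simp [norm_mul, norm_pow]
      _ ≤ (1/8)*(1/8)^2 + 3*((1/8)*(1/8)) + (1/8)^2*(1/8) := by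
          gcongr <;> first | positivity | exact hx.le | exact hy.le
      _ < 1 := by norm_num
  have hD : (1 - x * y ^ 2 - 3 * x * y - x ^ 2 * y) ≠ 0 := by
    intro h
    have h2 : x*y^2 + 3*(x*y) + x^2*y = 1 := by linear_combination -h
    rw [h2] at hnorm
    simp at hnorm
  have hSval : S = (1 - x * y) / (1 - x * y ^ 2 - 3 * x * y - x ^ 2 * y) := by
    rw [eq_div_iff hD]
    linear_combination hval
  rw [hFeq, ← hSval]
  exact hFS
end

section
/- If p and q are relatively prime positive integers, then the univariate power series ∑_{m≥0} ( (2pm)! (2qm)! / ((pm)!² (qm)!²) ) z^m is not an algebraic function of z. -/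
open scoped Nat
open Filter Topology Finset

namespace HeightTwoAux

lemma cb_sq_lower : ∀ n : ℕ, 1 ≤ n → 16 ^ n ≤ 4 * n * Nat.centralBinom n ^ 2 := by
  intro n
  induction n with
  | zero => intro h; omega
  | succ n ih =>
    intro _
    rcases Nat.eq_zero_or_pos n with h0 | h1
    · subst h0; decide
    · have hrec := Nat.succ_mul_centralBinom_succ n
      have ihn := ih h1
      have key : (n+1) * 16 ^ (n+1) ≤ (n+1) * (4 * (n+1) * Nat.centralBinom (n+1) ^ 2) := by
        have e : (n+1) * (4 * (n+1) * Nat.centralBinom (n+1) ^ 2)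
            = 4 * ((n+1) * Nat.centralBinom (n+1)) ^ 2 := by ring
        rw [e, hrec]
        calc (n+1) * 16 ^ (n+1) = 16*(n+1) * 16^n := by ring
          _ ≤ 16*(n+1) * (4 * n * Nat.centralBinom n ^ 2) := by gcongr
          _ ≤ 4 * (2 * (2*n+1) * Nat.centralBinom n) ^ 2 := by nlinarith [sq_nonneg (Nat.centralBinom n)]
      exact Nat.le_of_mul_le_mul_left key (Nat.succ_pos n)

lemma cb_sq_upper : ∀ n : ℕ, (n+1) * Nat.centralBinom n ^ 2 ≤ 16 ^ n := by
  intro n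
  induction n with
  | zero => decide
  | succ n ih =>
    have hrec := Nat.succ_mul_centralBinom_succ n
    have key : (n+1)^2 * ((n+1+1) * Nat.centralBinom (n+1) ^ 2) ≤ (n+1)^2 * 16 ^ (n+1) := by
      have e : (n+1)^2 * ((n+1+1) * Nat.centralBinom (n+1) ^ 2)
          = (n+2) * ((n+1) * Nat.centralBinom (n+1)) ^ 2 := by ring
      rw [e, hrec]
      calc (n+2) * (2 * (2*n+1) * Nat.centralBinom n) ^ 2
          = (4*(n+2)*(2*n+1)^2) * Nat.centralBinom n ^ 2 := by ring
        _ ≤ (16*(n+1)^3) * Nat.centralBinom n ^ 2 := by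
            gcongr ?_ * _
            nlinarith
        _ = 16*(n+1)^2 * ((n+1) * Nat.centralBinom n ^ 2) := by ring
        _ ≤ 16*(n+1)^2 * 16 ^ n := by gcongr
        _ = (n+1)^2 * 16 ^ (n+1) := by rw [pow_succ]; ring
    exact Nat.le_of_mul_le_mul_left key (by positivity)

lemma A_up (p q m : ℕ) (hp : 0 < p) (hq : 0 < q) (hm : 1 ≤ m) :
    m * (Nat.centralBinom (p*m) * Nat.centralBinom (q*m)) ≤ 4 ^ ((p+q)*m) := by
  have h2 : (m * (Nat.centralBinom (p*m) * Nat.centralBinom (q*m)))^2 ≤ (4 ^ ((p+q)*m))^2 := by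
    have hmm : m * m ≤ (p*m+1) * (q*m+1) := by
      have h1 : m ≤ p*m+1 := le_trans (Nat.le_mul_of_pos_left m hp) (Nat.le_succ _)
      have h2 : m ≤ q*m+1 := le_trans (Nat.le_mul_of_pos_left m hq) (Nat.le_succ _)
      exact Nat.mul_le_mul h1 h2
    calc (m * (Nat.centralBinom (p*m) * Nat.centralBinom (q*m)))^2
        = (m*m) * (Nat.centralBinom (p*m)^2 * Nat.centralBinom (q*m)^2) := by ring
      _ ≤ ((p*m+1)*(q*m+1)) * (Nat.centralBinom (p*m)^2 * Nat.centralBinom (q*m)^2) := by gcongr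
      _ = ((p*m+1) * Nat.centralBinom (p*m)^2) * ((q*m+1) * Nat.centralBinom (q*m)^2) := by ring
      _ ≤ 16 ^ (p*m) * 16 ^ (q*m) := Nat.mul_le_mul (cb_sq_upper _) (cb_sq_upper _)
      _ = 16 ^ ((p+q)*m) := by rw [← pow_add]; congr 1; ring
      _ = (4 ^ ((p+q)*m))^2 := by
          rw [← pow_mul, show (16:ℕ) = 4^2 by norm_num, ← pow_mul]
          congr 1
          ring
  exact (Nat.pow_le_pow_iff_left (by norm_num)).mp h2

lemma A_low (p q m : ℕ) (hp : 0 < p) (hq : 0 < q) (hm : 1 ≤ m) :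
    4 ^ ((p+q)*m) ≤ 4*(p*q*m) * (Nat.centralBinom (p*m) * Nat.centralBinom (q*m)) := by
  have h2 : (4 ^ ((p+q)*m))^2 ≤ (4*(p*q*m) * (Nat.centralBinom (p*m) * Nat.centralBinom (q*m)))^2 := by
    have hpm : 1 ≤ p*m := Nat.one_le_iff_ne_zero.mpr (by positivity)
    have hqm : 1 ≤ q*m := Nat.one_le_iff_ne_zero.mpr (by positivity)
    calc (4 ^ ((p+q)*m))^2 = 16 ^ ((p+q)*m) := by
          rw [← pow_mul, show (16:ℕ) = 4^2 by norm_num, ← pow_mul]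
          congr 1
          ring
      _ = 16 ^ (p*m) * 16 ^ (q*m) := by rw [← pow_add]; congr 1; ring
      _ ≤ (4*(p*m) * Nat.centralBinom (p*m)^2) * (4*(q*m) * Nat.centralBinom (q*m)^2) :=
          Nat.mul_le_mul (cb_sq_lower _ hpm) (cb_sq_lower _ hqm)
      _ = (16*(p*m*(q*m))) * (Nat.centralBinom (p*m) * Nat.centralBinom (q*m))^2 := by ring
      _ ≤ (16*(p*q*m*(p*q*m))) * (Nat.centralBinom (p*m) * Nat.centralBinom (q*m))^2 := by
          gcongr 16 * ?_ * _
          calc p*m*(q*m) = (p*q*m)*m := by ring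
            _ ≤ (p*q*m)*(p*q*m) := by
                gcongr
                calc m = 1*1*m := by ring
                  _ ≤ p*q*m := by gcongr <;> omega
      _ = (4*(p*q*m) * (Nat.centralBinom (p*m) * Nat.centralBinom (q*m)))^2 := by ring
  exact (Nat.pow_le_pow_iff_left (by norm_num)).mp h2

noncomputable def aa (p q m : ℕ) : ℝ := ((Nat.centralBinom (p*m) * Nat.centralBinom (q*m) : ℕ) : ℝ)
noncomputable def rr (p q : ℕ) : ℝ := ((4:ℝ) ^ (p+q))⁻¹

lemma rr_pos (p q : ℕ) : 0 < rr p q := by unfold rr; positivity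

lemma aa_nonneg (p q m : ℕ) : 0 ≤ aa p q m := by unfold aa; positivity

lemma rr_pow (p q m : ℕ) : (4:ℝ) ^ ((p+q)*m) * rr p q ^ m = 1 := by
  rw [rr, ← inv_pow, ← pow_mul, ← mul_pow]
  norm_num

lemma aa_up (p q m : ℕ) (hp : 0 < p) (hq : 0 < q) (hm : 1 ≤ m) :
    (m:ℝ) * (aa p q m * rr p q ^ m) ≤ 1 := by
  have h := A_up p q m hp hq hm
  have h' : ((m * (Nat.centralBinom (p*m) * Nat.centralBinom (q*m)) : ℕ) : ℝ)
      ≤ (((4:ℕ) ^ ((p+q)*m) : ℕ) : ℝ) := Nat.cast_le.mpr h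
  push_cast at h'
  calc (m:ℝ) * (aa p q m * rr p q ^ m) = ((m:ℝ) * aa p q m) * rr p q ^ m := by ring
    _ ≤ (4:ℝ) ^ ((p+q)*m) * rr p q ^ m := by
        apply mul_le_mul_of_nonneg_right _ (by have := rr_pos p q; positivity)
        unfold aa; push_cast; linarith
    _ = 1 := rr_pow p q m

lemma aa_low (p q m : ℕ) (hp : 0 < p) (hq : 0 < q) (hm : 1 ≤ m) :
    1 ≤ (4*p*q*m : ℝ) * (aa p q m * rr p q ^ m) := by
  have h := A_low p q m hp hq hm
  have h' : (((4:ℕ) ^ ((p+q)*m) : ℕ) : ℝ)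
      ≤ ((4*(p*q*m) * (Nat.centralBinom (p*m) * Nat.centralBinom (q*m)) : ℕ) : ℝ) :=
    Nat.cast_le.mpr h
  push_cast at h'
  calc (1:ℝ) = (4:ℝ) ^ ((p+q)*m) * rr p q ^ m := (rr_pow p q m).symm
    _ ≤ ((4*p*q*m : ℝ) * aa p q m) * rr p q ^ m := by
        apply mul_le_mul_of_nonneg_right _ (by have := rr_pos p q; positivity)
        unfold aa; push_cast; linarith
    _ = (4*p*q*m : ℝ) * (aa p q m * rr p q ^ m) := by ring

lemma g_bounds (p q : ℕ) (hp : 0 < p) (hq : 0 < q) {y : ℝ} (h0 : 0 < y) (h1 : y < 1) :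
    Summable (fun m : ℕ => aa p q m * (y * rr p q) ^ m) ∧
    (1/(4*p*q) : ℝ) * (-Real.log (1-y)) + 1 ≤ (∑' m : ℕ, aa p q m * (y * rr p q) ^ m) ∧
    (∑' m : ℕ, aa p q m * (y * rr p q) ^ m) ≤ 1 + (-Real.log (1-y)) := by
  set F := fun m : ℕ => aa p q m * (y * rr p q) ^ m with hFdef
  have hrpos := rr_pos p q
  have hF : ∀ m, F m = (aa p q m * rr p q ^ m) * y ^ m := by
    intro m; simp only [hFdef, mul_pow]; ring
  have hFnn : ∀ m, 0 ≤ F m := by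
    intro m; rw [hF]
    have := aa_nonneg p q m
    positivity
  have S3 : HasSum (fun n : ℕ => y^(n+1)/((n:ℝ)+1)) (-Real.log (1-y)) := by
    have := Real.hasSum_pow_div_log_of_abs_lt_one (x := y) (by rw [abs_of_pos h0]; exact h1)
    simpa using this
  have hup : ∀ n : ℕ, F (n+1) ≤ y^(n+1)/((n:ℝ)+1) := by
    intro n
    rw [hF]
    have h := aa_up p q (n+1) hp hq (by omega)
    push_cast at h
    have h2 : aa p q (n+1) * rr p q ^ (n+1) ≤ 1/((n:ℝ)+1) := by
      rw [le_div_iff₀ (by positivity)]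
      linarith
    calc (aa p q (n+1) * rr p q ^ (n+1)) * y^(n+1) ≤ (1/((n:ℝ)+1)) * y^(n+1) := by
          apply mul_le_mul_of_nonneg_right h2 (by positivity)
      _ = y^(n+1)/((n:ℝ)+1) := by ring
  have hlow : ∀ n : ℕ, (1/(4*p*q) : ℝ) * (y^(n+1)/((n:ℝ)+1)) ≤ F (n+1) := by
    intro n
    rw [hF]
    have h := aa_low p q (n+1) hp hq (by omega)
    push_cast at h
    have hpq : (0:ℝ) < 4*p*q := by positivity
    have h2 : (1/(4*p*q) : ℝ) * (1/((n:ℝ)+1)) ≤ aa p q (n+1) * rr p q ^ (n+1) := by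
      rw [div_mul_div_comm, one_mul, div_le_iff₀ (by positivity)]
      calc (1:ℝ) ≤ (4*p*q*((n:ℕ)+1) : ℝ) * (aa p q (n+1) * rr p q ^ (n+1)) := by
            push_cast at h ⊢; linarith
        _ = aa p q (n+1) * rr p q ^ (n+1) * (4*p*q*((n:ℝ)+1)) := by push_cast; ring
    calc (1/(4*p*q) : ℝ) * (y^(n+1)/((n:ℝ)+1))
        = ((1/(4*p*q) : ℝ) * (1/((n:ℝ)+1))) * y^(n+1) := by ring
      _ ≤ (aa p q (n+1) * rr p q ^ (n+1)) * y^(n+1) := by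
          apply mul_le_mul_of_nonneg_right h2 (by positivity)
  have hsum1 : Summable (fun n => F (n+1)) :=
    Summable.of_nonneg_of_le (fun n => hFnn _) hup S3.summable
  have hsumF : Summable F := (summable_nat_add_iff 1).mp hsum1
  have hF0 : F 0 = 1 := by
    simp [hFdef, aa]
  have htsum : ∑' m, F m = 1 + ∑' n, F (n+1) := by
    rw [Summable.tsum_eq_zero_add hsumF, hF0]
  have S1 : HasSum (fun n : ℕ => (1/(4*p*q) : ℝ) * (y^(n+1)/((n:ℝ)+1)))
      ((1/(4*p*q) : ℝ) * (-Real.log (1-y))) := S3.mul_left _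
  refine ⟨hsumF, ?_, ?_⟩
  · have := Summable.tsum_le_tsum hlow S1.summable hsum1
    rw [S1.tsum_eq] at this
    rw [htsum]; linarith
  · have := Summable.tsum_le_tsum hup hsum1 S3.summable
    rw [S3.tsum_eq] at this
    rw [htsum]; linarith

noncomputable def cA (p q m : ℕ) : ℂ := ((Nat.centralBinom (p*m) * Nat.centralBinom (q*m) : ℕ) : ℂ)
noncomputable def gc (p q : ℕ) : ℂ → ℂ := fun z => ∑' m : ℕ, cA p q m * z ^ m
noncomputable def FS (p q : ℕ) : FormalMultilinearSeries ℂ ℂ ℂ :=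
  FormalMultilinearSeries.ofScalars ℂ (cA p q)

lemma norm_cA (p q m : ℕ) : ‖cA p q m‖ = aa p q m := by
  simp [cA, aa]

lemma FS_radius (p q : ℕ) (hp : 0 < p) (hq : 0 < q) :
    ENNReal.ofReal (rr p q) ≤ (FS p q).radius := by
  have hnn : 0 ≤ rr p q := (rr_pos p q).le
  rw [ENNReal.ofReal_eq_coe_nnreal hnn]
  apply (FS p q).le_radius_of_bound 1
  intro n
  rw [FS, FormalMultilinearSeries.ofScalars_norm, norm_cA]
  show aa p q n * ((⟨rr p q, hnn⟩ : NNReal) : ℝ) ^ n ≤ 1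
  have hr : ((⟨rr p q, hnn⟩ : NNReal) : ℝ) = rr p q := rfl
  rw [hr]
  rcases Nat.eq_zero_or_pos n with h0 | h1
  · subst h0; simp [aa]
  · have h := aa_up p q n hp hq h1
    have h2 : 0 ≤ aa p q n * rr p q ^ n := by
      have := aa_nonneg p q n
      have := rr_pos p q
      positivity
    have h3 : aa p q n * rr p q ^ n ≤ (n:ℝ) * (aa p q n * rr p q ^ n) :=
      le_mul_of_one_le_left h2 (by exact_mod_cast h1)
    linarith

lemma gc_eq_sum (p q : ℕ) : gc p q = (FS p q).sum := by
  funext z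
  rw [gc, FormalMultilinearSeries.sum]
  exact tsum_congr fun n => by
    rw [FS, FormalMultilinearSeries.ofScalars_apply_eq, smul_eq_mul]

lemma gc_analytic (p q : ℕ) (hp : 0 < p) (hq : 0 < q) :
    AnalyticOnNhd ℂ (gc p q) (Metric.ball (0:ℂ) (rr p q)) := by
  have h1 : 0 < (FS p q).radius :=
    lt_of_lt_of_le (by simp [ENNReal.ofReal_pos, rr_pos p q]) (FS_radius p q hp hq)
  have h2 := (FS p q).hasFPowerSeriesOnBall h1
  rw [← gc_eq_sum] at h2
  apply h2.analyticOnNhd.mono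
  rw [← Metric.emetric_ball (x := (0:ℂ)) (ε := rr p q)]
  exact EMetric.ball_subset_ball (FS_radius p q hp hq)

lemma gc_real (p q : ℕ) (x : ℝ) :
    gc p q (x:ℂ) = ((∑' m : ℕ, aa p q m * x ^ m : ℝ) : ℂ) := by
  rw [gc, Complex.ofReal_tsum]
  exact tsum_congr fun m => by
    push_cast [aa, cA]
    ring

lemma coeff_eq (p q m : ℕ) :
    (((2*p*m)! * (2*q*m)! : ℂ) / (((p*m)!)^2 * ((q*m)!)^2)) = cA p q m := by
  have key : ∀ n : ℕ, ((2*n)! : ℂ) = (Nat.centralBinom n : ℂ) * ((n)! : ℂ)^2 := by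
    intro n
    have h := Nat.choose_mul_factorial_mul_factorial (show n ≤ 2*n by omega)
    have h2 : 2*n - n = n := by omega
    rw [h2] at h
    calc ((2*n)! : ℂ) = (((2*n).choose n * n ! * n ! : ℕ) : ℂ) := by rw [h]
      _ = _ := by push_cast [Nat.centralBinom]; ring
  have e1 : 2*p*m = 2*(p*m) := by ring
  have e2 : 2*q*m = 2*(q*m) := by ring
  rw [e1, e2, key, key]
  have hf1 : ((p*m)! : ℂ) ≠ 0 := Nat.cast_ne_zero.mpr (Nat.factorial_ne_zero _)
  have hf2 : ((q*m)! : ℂ) ≠ 0 := Nat.cast_ne_zero.mpr (Nat.factorial_ne_zero _)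
  rw [cA]
  field_simp
  push_cast
  ring

lemma exists_frequently_of_eventually_exists {ι : Type*} (s : Finset ι)
    {P : ι → ℕ → Prop} (h : ∀ᶠ n in atTop, ∃ i ∈ s, P i n) :
    ∃ i ∈ s, ∃ᶠ n in atTop, P i n := by
  by_contra hc
  push_neg at hc
  have hc' : ∀ i ∈ s, ∀ᶠ n in atTop, ¬ P i n := by
    intro i hi
    have := hc i hi
    exact this
  have hall : ∀ᶠ n in atTop, ∀ i ∈ s, ¬ P i n := (Filter.eventually_all_finset s).mpr hc'
  rcases (h.and hall).exists with ⟨n, ⟨i, his, hP⟩, hnot⟩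
  exact hnot i his hP

lemma tendsto_n_div_log_pow (m : ℕ) :
    Tendsto (fun n : ℕ => (n:ℝ)/(1+Real.log n)^m) atTop atTop := by
  have h1 : Tendsto (fun n : ℕ => 1 + Real.log n) atTop atTop :=
    tendsto_atTop_add_const_left _ 1 (Real.tendsto_log_atTop.comp tendsto_natCast_atTop_atTop)
  have h2 : Tendsto (fun n : ℕ => Real.exp (1 + Real.log n)/(1 + Real.log n)^m) atTop atTop :=
    (Real.tendsto_exp_div_pow_atTop m).comp h1
  have h3 : Tendsto (fun n : ℕ => Real.exp 1 * ((n:ℝ)/(1+Real.log n)^m)) atTop atTop := by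
    apply h2.congr'
    filter_upwards [eventually_ge_atTop 1] with n hn
    have hn0 : (0:ℝ) < n := by exact_mod_cast Nat.lt_of_lt_of_le Nat.zero_lt_one hn
    rw [Real.exp_add, Real.exp_log hn0]
    ring
  have h4 := h3.const_mul_atTop (show (0:ℝ) < (Real.exp 1)⁻¹ by positivity)
  apply h4.congr
  intro n
  rw [← mul_assoc, inv_mul_cancel₀ (Real.exp_ne_zero 1), one_mul]

lemma final_contra {m ki kj : ℕ} (hm : 0 < m) {C1 C2 C3 C4 : ℝ}
    (hC1 : 0 < C1) (hC2 : 0 < C2) (hC3 : 0 < C3) (hC4 : 0 < C4)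
    {h : ℕ → ℝ}
    (hh0 : Tendsto h atTop (𝓝 0))
    (hinf : Tendsto (fun n : ℕ => (n:ℝ) * h n ^ m) atTop atTop)
    (hfr : ∃ᶠ n : ℕ in atTop,
      C1 * ((n:ℝ)⁻¹)^ki * (h n)^m ≤ C2 * ((n:ℝ)⁻¹)^kj ∧
      C3 * ((n:ℝ)⁻¹)^kj ≤ C4 * ((n:ℝ)⁻¹)^ki * (h n)^m) : False := by
  rcases le_or_gt kj ki with hk | hk
  · have ht : Tendsto (fun n => C4 * h n ^ m) atTop (𝓝 0) := by
      have := (hh0.pow m).const_mul C4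
      simpa [zero_pow hm.ne'] using this
    have hev : ∀ᶠ n : ℕ in atTop, C4 * h n ^ m < C3 ∧ (1:ℝ) ≤ n := by
      refine (ht.eventually_lt_const hC3).and ?_
      filter_upwards [eventually_ge_atTop 1] with n hn
      exact_mod_cast hn
    rcases (hfr.and_eventually hev).exists with ⟨n, ⟨_, hf2⟩, hlt, hn1⟩
    have hn0 : (0:ℝ) < (n:ℝ)⁻¹ := by positivity
    have hx1 : (n:ℝ)⁻¹ ≤ 1 := by
      rw [inv_le_one_iff₀]
      right; exact hn1
    have hle : ((n:ℝ)⁻¹)^ki ≤ ((n:ℝ)⁻¹)^kj := pow_le_pow_of_le_one hn0.le hx1 hk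
    have hchain : C3 * ((n:ℝ)⁻¹)^kj ≤ (C4 * h n^m) * ((n:ℝ)⁻¹)^kj := by
      calc C3 * ((n:ℝ)⁻¹)^kj ≤ C4 * ((n:ℝ)⁻¹)^ki * h n^m := hf2
        _ ≤ C4 * ((n:ℝ)⁻¹)^kj * h n^m := by
            have hh : 0 ≤ h n ^ m := by
              nlinarith [mul_pos hC3 (pow_pos hn0 kj), mul_pos hC4 (pow_pos hn0 ki)]
            gcongr
        _ = (C4 * h n^m) * ((n:ℝ)⁻¹)^kj := by ring
    have hC34 : C3 ≤ C4 * h n^m := le_of_mul_le_mul_right hchain (pow_pos hn0 kj)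
    linarith
  · have hev : ∀ᶠ n : ℕ in atTop, C2 < C1 * ((n:ℝ) * h n ^ m) ∧ (1:ℝ) ≤ n := by
      refine ((hinf.const_mul_atTop hC1).eventually_gt_atTop C2).and ?_
      filter_upwards [eventually_ge_atTop 1] with n hn
      exact_mod_cast hn
    rcases (hfr.and_eventually hev).exists with ⟨n, ⟨hf1, hf2⟩, hgt, hn1⟩
    have hnpos : (0:ℝ) < (n:ℝ) := by linarith
    have hn0 : (0:ℝ) < (n:ℝ)⁻¹ := by positivity
    have hx1 : (n:ℝ)⁻¹ ≤ 1 := by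
      rw [inv_le_one_iff₀]
      right; exact hn1
    have hhm : 0 ≤ h n ^ m := by
      nlinarith [mul_pos hC3 (pow_pos hn0 kj), mul_pos hC4 (pow_pos hn0 ki)]
    have hstep : ((n:ℝ)⁻¹)^kj ≤ ((n:ℝ)⁻¹)^ki * (n:ℝ)⁻¹ := by
      rw [← pow_succ]
      exact pow_le_pow_of_le_one hn0.le hx1 (by omega)
    have hxki : 0 < ((n:ℝ)⁻¹)^ki := pow_pos hn0 ki
    have h2 : C1 * h n ^ m ≤ C2 * (n:ℝ)⁻¹ := by
      apply le_of_mul_le_mul_right _ hxki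
      calc C1 * h n^m * ((n:ℝ)⁻¹)^ki = C1 * ((n:ℝ)⁻¹)^ki * h n^m := by ring
        _ ≤ C2 * ((n:ℝ)⁻¹)^kj := hf1
        _ ≤ C2 * (((n:ℝ)⁻¹)^ki * (n:ℝ)⁻¹) := by gcongr
        _ = C2 * (n:ℝ)⁻¹ * ((n:ℝ)⁻¹)^ki := by ring
    have h3 : C1 * ((n:ℝ) * h n^m) ≤ C2 := by
      calc C1 * ((n:ℝ) * h n^m) = (n:ℝ) * (C1 * h n^m) := by ring
        _ ≤ (n:ℝ) * (C2 * (n:ℝ)⁻¹) := by gcongr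
        _ = C2 := by field_simp
    linarith

end HeightTwoAux
open scoped Nat
open Filter Topology Finset HeightTwoAux

/-- A function of one complex variable is algebraic near the origin: it satisfies a
nonzero polynomial equation with polynomial coefficients. -/
def IsAlgebraicFn (g : ℂ → ℂ) : Prop :=
  ∃ P : Polynomial (Polynomial ℂ), P ≠ 0 ∧
    ∃ ε > (0 : ℝ), ∀ t : ℂ, ‖t‖ < ε →
      (P.map (Polynomial.evalRingHom t)).eval (g t) = 0

set_option maxHeartbeats 2000000 in
theorem height_two_series_not_algebraic
    (p q : ℕ) (hp : 0 < p) (hq : 0 < q) (hpq : Nat.Coprime p q) :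
    ¬ IsAlgebraicFn (fun z : ℂ => ∑' m : ℕ,
        (((2 * p * m)! * (2 * q * m)! : ℂ) / (((p * m)!) ^ 2 * ((q * m)!) ^ 2)) * z ^ m) := by
  classical
  intro halg
  obtain ⟨P, hP0, ε, hε, hPe⟩ := halg
  have hfun : (fun z : ℂ => ∑' m : ℕ,
      (((2 * p * m)! * (2 * q * m)! : ℂ) / (((p * m)!) ^ 2 * ((q * m)!) ^ 2)) * z ^ m)
      = gc p q := by
    funext z
    exact tsum_congr fun m => by rw [coeff_eq p q m]
  rw [hfun] at hPe
  set d := P.natDegree with hd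
  set rrr := rr p q with hrrr
  have hrp : 0 < rrr := rr_pos p q
  -- identity theorem
  have hrepr : ∀ t : ℂ, (P.map (Polynomial.evalRingHom t)).eval (gc p q t)
      = ∑ j ∈ Finset.range (d+1), (P.coeff j).eval t * gc p q t ^ j := by
    intro t
    rw [Polynomial.eval_map, Polynomial.eval₂_eq_sum_range]
    simp [Polynomial.coe_evalRingHom, hd]
  have hFan : AnalyticOnNhd ℂ
      (fun t => ∑ j ∈ Finset.range (d+1), (P.coeff j).eval t * gc p q t ^ j)
      (Metric.ball (0:ℂ) rrr) := by
    rw [show (fun t => ∑ j ∈ Finset.range (d+1), (P.coeff j).eval t * gc p q t ^ j) = ∑ j ∈ Finset.range (d+1), (fun t => (P.coeff j).eval t * gc p q t ^ j) from by ext t; simp [Finset.sum_apply]]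
    apply Finset.analyticOnNhd_sum
    intro j _
    exact ((AnalyticOnNhd.eval_polynomial (𝕜 := ℂ) (P.coeff j)).mono
      (Set.subset_univ _)).mul ((gc_analytic p q hp hq).pow j)
  have hzero : Set.EqOn
      (fun t => ∑ j ∈ Finset.range (d+1), (P.coeff j).eval t * gc p q t ^ j) 0
      (Metric.ball (0:ℂ) rrr) := by
    apply hFan.eqOn_zero_of_preconnected_of_eventuallyEq_zero
      (convex_ball (0:ℂ) rrr).isPreconnected (Metric.mem_ball_self hrp)
    filter_upwards [Metric.ball_mem_nhds (0:ℂ) hε] with t ht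
    have hnt : ‖t‖ < ε := by simpa [dist_zero_right] using ht
    have h0 := hPe t hnt
    rw [hrepr t] at h0
    simpa using h0
  -- real sequence
  set α : ℝ := 1/(4*p*q) with hα
  have hαpos : 0 < α := by
    rw [hα]; positivity
  set ys : ℕ → ℝ := fun n => 1 - (n:ℝ)⁻¹ with hys
  set xs : ℕ → ℝ := fun n => ys n * rrr with hxs
  set gr : ℕ → ℝ := fun n => ∑' m : ℕ, aa p q m * (ys n * rr p q) ^ m with hgrdef
  have hy : ∀ n : ℕ, 2 ≤ n → 0 < ys n ∧ ys n < 1 := by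
    intro n hn
    have h2 : (2:ℝ) ≤ n := by exact_mod_cast hn
    have hn0 : (0:ℝ) < n := by linarith
    constructor
    · rw [hys]
      have h1 : (n:ℝ)⁻¹ ≤ 2⁻¹ := inv_anti₀ (by norm_num) h2
      have h5 : (2:ℝ)⁻¹ < 1 := by norm_num
      linarith
    · rw [hys]
      have : 0 < (n:ℝ)⁻¹ := by positivity
      linarith
  have hgr : ∀ n : ℕ, 2 ≤ n → α * Real.log n + 1 ≤ gr n ∧ gr n ≤ 1 + Real.log n := by
    intro n hn
    obtain ⟨hy0, hy1⟩ := hy n hn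
    obtain ⟨hs, hl, hu⟩ := g_bounds p q hp hq hy0 hy1
    have hlog : -Real.log (1 - ys n) = Real.log n := by
      have h1 : (1:ℝ) - ys n = (n:ℝ)⁻¹ := by rw [hys]; ring
      rw [h1, Real.log_inv]; ring
    rw [hlog] at hl hu
    exact ⟨by rw [hα] at *; exact hl, hu⟩
  have hlogn : ∀ n : ℕ, 2 ≤ n → 0 ≤ Real.log n := by
    intro n hn
    apply Real.log_nonneg
    have : (2:ℝ) ≤ n := by exact_mod_cast hn
    linarith
  have hgr1 : ∀ n : ℕ, 2 ≤ n → 1 ≤ gr n := by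
    intro n hn
    have := (hgr n hn).1
    have h2 := hlogn n hn
    nlinarith
  set hh : ℕ → ℝ := fun n => (gr n)⁻¹ with hhh
  have hhpos : ∀ n : ℕ, 2 ≤ n → 0 < hh n := by
    intro n hn
    have := hgr1 n hn
    rw [hhh]
    positivity
  have hhub : ∀ n : ℕ, 2 ≤ n → hh n ≤ (α * Real.log n + 1)⁻¹ := by
    intro n hn
    have h1 := (hgr n hn).1
    have h2 := hlogn n hn
    rw [hhh]
    apply inv_anti₀ (by nlinarith) h1
  have hhlb : ∀ n : ℕ, 2 ≤ n → (1 + Real.log n)⁻¹ ≤ hh n := by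
    intro n hn
    have h1 := (hgr n hn).2
    have h3 := hgr1 n hn
    rw [hhh]
    apply inv_anti₀ (by linarith) h1
  have hh0 : Filter.Tendsto hh atTop (𝓝 0) := by
    apply squeeze_zero' (f := hh) (g := fun n : ℕ => (α * Real.log n + 1)⁻¹)
    · filter_upwards [eventually_ge_atTop 2] with n hn
      exact (hhpos n hn).le
    · filter_upwards [eventually_ge_atTop 2] with n hn
      exact hhub n hn
    · apply tendsto_inv_atTop_zero.comp
      apply tendsto_atTop_add_const_right
      exact (Real.tendsto_log_atTop.comp tendsto_natCast_atTop_atTop).const_mul_atTop hαpos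
  have hinf : ∀ m : ℕ, Filter.Tendsto (fun n : ℕ => (n:ℝ) * hh n ^ m) atTop atTop := by
    intro m
    apply tendsto_atTop_mono' atTop _ (tendsto_n_div_log_pow m)
    filter_upwards [eventually_ge_atTop 2] with n hn
    have h1 := hhlb n hn
    have h2 := hlogn n hn
    have h3 : (0:ℝ) < 1 + Real.log n := by linarith
    rw [div_eq_mul_inv, ← inv_pow]
    have hn0 : (0:ℝ) ≤ n := by positivity
    gcongr
  -- the polynomial equation along the sequence
  have heqn : ∀ n : ℕ, 2 ≤ n →
      ∑ j ∈ Finset.range (d+1), (P.coeff j).eval ((xs n : ℝ):ℂ) * ((gr n : ℝ):ℂ)^j = 0 := by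
    intro n hn
    obtain ⟨hy0, hy1⟩ := hy n hn
    have hxpos : 0 < xs n := by rw [hxs]; positivity
    have hxlt : xs n < rrr := by
      have := mul_lt_mul_of_pos_right hy1 hrp
      rw [hxs]
      simpa using this
    have hmem : ((xs n : ℝ):ℂ) ∈ Metric.ball (0:ℂ) rrr := by
      rw [Metric.mem_ball, dist_zero_right, Complex.norm_real, Real.norm_eq_abs,
        abs_of_pos hxpos]
      exact hxlt
    have h0 := hzero hmem
    simp only [Pi.zero_apply] at h0
    have hgc : gc p q ((xs n : ℝ):ℂ) = ((gr n : ℝ):ℂ) := by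
      rw [gc_real p q (xs n)]
    rw [hgc] at h0
    exact h0
  -- terms
  set S : Finset ℕ := (Finset.range (d+1)).filter (fun j => P.coeff j ≠ 0) with hS
  have hdS : d ∈ S := by
    rw [hS, Finset.mem_filter]
    exact ⟨Finset.self_mem_range_succ d, Polynomial.leadingCoeff_ne_zero.mpr hP0⟩
  have hjd : ∀ j ∈ S, j ≤ d := by
    intro j hj
    rw [hS, Finset.mem_filter, Finset.mem_range] at hj
    exact Nat.lt_succ_iff.mp hj.1
  have hSne : ∀ j ∈ S, P.coeff j ≠ 0 := by
    intro j hj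
    rw [hS, Finset.mem_filter] at hj
    exact hj.2
  set T : ℕ → ℕ → ℂ := fun j n => (P.coeff j).eval ((xs n : ℝ):ℂ) * ((hh n : ℝ):ℂ)^(d-j)
    with hT
  have hTsum : ∀ n : ℕ, 2 ≤ n → ∑ j ∈ S, T j n = 0 := by
    intro n hn
    have hgrpos : 0 < gr n := lt_of_lt_of_le one_pos (hgr1 n hn)
    set g : ℂ := ((gr n : ℝ):ℂ) with hg
    have hgne : g ≠ 0 := by
      rw [hg]
      exact_mod_cast Complex.ofReal_ne_zero.mpr hgrpos.ne'
    have key : ∀ j ∈ Finset.range (d+1),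
        (P.coeff j).eval ((xs n : ℝ):ℂ) * g^j * (g⁻¹)^d = T j n := by
      intro j hj
      rw [Finset.mem_range] at hj
      have hjd' : j ≤ d := by omega
      have hpow : g^j * (g⁻¹)^d = (g⁻¹)^(d-j) := by
        calc g^j * (g⁻¹)^d = g^j * ((g⁻¹)^(d-j) * (g⁻¹)^j) := by
              rw [← pow_add, Nat.sub_add_cancel hjd']
          _ = (g⁻¹)^(d-j) * (g * g⁻¹)^j := by rw [mul_pow]; ring
          _ = (g⁻¹)^(d-j) := by rw [mul_inv_cancel₀ hgne, one_pow, mul_one]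
      rw [hT, mul_assoc, hpow]
      congr 1
      congr 1
      rw [hhh, hg]
      push_cast
      rfl
    calc ∑ j ∈ S, T j n = ∑ j ∈ Finset.range (d+1), T j n := by
          rw [hS]
          apply Finset.sum_filter_of_ne
          intro j _ hne
          intro hcoeff
          apply hne
          simp [hT, hcoeff]
      _ = ∑ j ∈ Finset.range (d+1), (P.coeff j).eval ((xs n : ℝ):ℂ) * g^j * (g⁻¹)^d :=
          (Finset.sum_congr rfl key).symm
      _ = (∑ j ∈ Finset.range (d+1), (P.coeff j).eval ((xs n : ℝ):ℂ) * g^j) * (g⁻¹)^d := by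
          rw [Finset.sum_mul]
      _ = 0 := by rw [heqn n hn, zero_mul]
  -- factorization of coefficients at rrr
  set ρc : ℂ := ((rrr:ℝ):ℂ) with hρc
  set k : ℕ → ℕ := fun j => (P.coeff j).rootMultiplicity ρc with hk
  set E : ℕ → Polynomial ℂ := fun j => (P.coeff j) /ₘ (Polynomial.X - Polynomial.C ρc)^(k j)
    with hE
  have hfact : ∀ j, (Polynomial.X - Polynomial.C ρc)^(k j) * E j = P.coeff j := by
    intro j
    exact Polynomial.pow_mul_divByMonic_rootMultiplicity_eq _ _
  set W : ℕ → ℝ := fun j => ‖(E j).eval ρc‖ with hW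
  have hWpos : ∀ j ∈ S, 0 < W j := by
    intro j hj
    rw [hW]
    simp only [norm_pos_iff]
    exact Polynomial.eval_divByMonic_pow_rootMultiplicity_ne_zero ρc (hSne j hj)
  set w : ℕ → ℕ → ℝ := fun j n => ‖(E j).eval ((xs n : ℝ):ℂ)‖ with hw
  have hTnorm : ∀ j n : ℕ, 2 ≤ n → j ≤ d →
      ‖T j n‖ = (rrr * (n:ℝ)⁻¹)^(k j) * w j n * hh n ^ (d-j) := by
    intro j n hn hjd'
    have hn0 : (0:ℝ) < n := by
      have : (2:ℝ) ≤ n := by exact_mod_cast hn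
      linarith
    have hev : (P.coeff j).eval ((xs n : ℝ):ℂ)
        = (((xs n : ℝ):ℂ) - ρc)^(k j) * (E j).eval ((xs n : ℝ):ℂ) := by
      conv_lhs => rw [← hfact j]
      simp [Polynomial.eval_mul, Polynomial.eval_pow]
    have hdiff : ((xs n : ℝ):ℂ) - ρc = ((xs n - rrr : ℝ):ℂ) := by
      rw [hρc]; push_cast; ring
    have habs : ‖((xs n : ℝ):ℂ) - ρc‖ = rrr * (n:ℝ)⁻¹ := by
      rw [hdiff, Complex.norm_real, Real.norm_eq_abs]
      have hxv : xs n - rrr = -(rrr * (n:ℝ)⁻¹) := by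
        rw [hxs, hys]
        ring
      rw [hxv, abs_neg, abs_of_nonneg (by positivity)]
    have hhn : ‖((hh n : ℝ):ℂ)‖ = hh n := by
      rw [Complex.norm_real, Real.norm_eq_abs, abs_of_pos (hhpos n hn)]
    simp only [hT]
    rw [norm_mul, norm_pow, hhn, hev, norm_mul, norm_pow, habs]
  have hWev : ∀ j ∈ S, ∀ᶠ n : ℕ in atTop, W j / 2 ≤ w j n ∧ w j n ≤ W j + 1 := by
    intro j hj
    have hWj := hWpos j hj
    have hxtend : Filter.Tendsto (fun n : ℕ => ((xs n : ℝ):ℂ)) atTop (𝓝 ρc) := by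
      rw [hρc]
      apply (Complex.continuous_ofReal.tendsto rrr).comp
      have h1 : Filter.Tendsto xs atTop (𝓝 ((1 - 0) * rrr)) := by
        apply Filter.Tendsto.mul_const
        exact tendsto_const_nhds.sub (tendsto_inv_atTop_zero.comp tendsto_natCast_atTop_atTop)
      simpa using h1
    have hcont : Filter.Tendsto (fun n : ℕ => w j n) atTop (𝓝 (W j)) := by
      simp only [hw, hW]
      exact (continuous_norm.tendsto _).comp
        (((Polynomial.continuous (E j)).tendsto ρc).comp hxtend)
    have hIoo := hcont.eventually
      (Ioo_mem_nhds (by linarith : W j / 2 < W j) (by linarith : W j < W j + 1))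
    filter_upwards [hIoo] with n hn
    exact ⟨hn.1.le, hn.2.le⟩
  have hEv : ∀ᶠ n : ℕ in atTop, 2 ≤ n ∧ ∀ j ∈ S, (W j / 2 ≤ w j n ∧ w j n ≤ W j + 1) :=
    (eventually_ge_atTop 2).and ((Filter.eventually_all_finset S).mpr hWev)
  set D : ℝ := (S.card : ℝ) with hD
  have hD1 : 1 ≤ D := by
    rw [hD]
    exact_mod_cast Finset.card_pos.mpr ⟨d, hdS⟩
  have hpair : ∀ᶠ n : ℕ in atTop, ∃ ab ∈ S ×ˢ S,
      (ab.1 ≠ ab.2 ∧ ‖T ab.1 n‖ ≤ D * ‖T ab.2 n‖ ∧ ‖T ab.2 n‖ ≤ ‖T ab.1 n‖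
        ∧ 2 ≤ n ∧ ∀ j ∈ S, (W j / 2 ≤ w j n ∧ w j n ≤ W j + 1)) := by
    filter_upwards [hEv] with n hEvn
    obtain ⟨hn2, hWb⟩ := hEvn
    obtain ⟨a, haS, hamax⟩ := S.exists_max_image (fun j => ‖T j n‖) ⟨d, hdS⟩
    have hnInv : (0:ℝ) < (n:ℝ)⁻¹ := by
      have : (2:ℝ) ≤ (n:ℝ) := by exact_mod_cast hn2
      positivity
    have hTd : 0 < ‖T d n‖ := by
      rw [hTnorm d n hn2 le_rfl]
      have h1 := (hWb d hdS).1
      have h2 := hWpos d hdS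
      have h3 := hhpos n hn2
      have h4 : 0 < w d n := by linarith
      positivity
    have hTa : 0 < ‖T a n‖ := lt_of_lt_of_le hTd (hamax d hdS)
    have heq0 := hTsum n hn2
    have herase : (S.erase a).Nonempty := by
      rw [Finset.nonempty_iff_ne_empty]
      intro hemp
      have hsub : S ⊆ {a} := by
        intro x hx
        rw [Finset.mem_singleton]
        by_contra hxa
        have : x ∈ S.erase a := Finset.mem_erase.mpr ⟨hxa, hx⟩
        rw [hemp] at this
        exact absurd this (Finset.notMem_empty x)
      have hsing : S = {a} := Finset.Subset.antisymm hsub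
        (Finset.singleton_subset_iff.mpr haS)
      rw [hsing, Finset.sum_singleton] at heq0
      rw [heq0] at hTa
      simp at hTa
    obtain ⟨b, hbe, hbmax⟩ := (S.erase a).exists_max_image (fun j => ‖T j n‖) herase
    have hbS : b ∈ S := Finset.mem_of_mem_erase hbe
    have hba : b ≠ a := Finset.ne_of_mem_erase hbe
    have hsplit : T a n = -∑ j ∈ S.erase a, T j n := by
      apply eq_neg_of_add_eq_zero_left
      rw [Finset.add_sum_erase S (fun j => T j n) haS]
      exact heq0
    have hbound : ‖T a n‖ ≤ D * ‖T b n‖ := by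
      rw [hsplit, norm_neg]
      calc ‖∑ j ∈ S.erase a, T j n‖ ≤ ∑ j ∈ S.erase a, ‖T j n‖ := norm_sum_le _ _
        _ ≤ (S.erase a).card • ‖T b n‖ :=
            Finset.sum_le_card_nsmul _ _ _ (fun j hj => hbmax j hj)
        _ = ((S.erase a).card : ℝ) * ‖T b n‖ := nsmul_eq_mul _ _
        _ ≤ D * ‖T b n‖ := by
            apply mul_le_mul_of_nonneg_right _ (norm_nonneg _)
            rw [hD]
            exact_mod_cast Finset.card_le_card (Finset.erase_subset _ _)
    exact ⟨(a,b), Finset.mem_product.mpr ⟨haS, hbS⟩, hba.symm, hbound, hamax b hbS, hn2, hWb⟩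
  obtain ⟨ab, habS, hfreq⟩ := exists_frequently_of_eventually_exists (S ×ˢ S) hpair
  obtain ⟨a, b⟩ := ab
  rw [Finset.mem_product] at habS
  obtain ⟨haS, hbS⟩ := habS
  have key : ∀ i j : ℕ, i ∈ S → j ∈ S → i < j →
      (∃ᶠ n : ℕ in atTop, (‖T i n‖ ≤ D * ‖T j n‖ ∧ ‖T j n‖ ≤ D * ‖T i n‖)
        ∧ 2 ≤ n ∧ ∀ l ∈ S, (W l / 2 ≤ w l n ∧ w l n ≤ W l + 1)) → False := by
    intro i j hiS hjS hij hfr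
    have hid : i ≤ d := hjd i hiS
    have hjd2 : j ≤ d := hjd j hjS
    have hWi := hWpos i hiS
    have hWj := hWpos j hjS
    have hD0 : 0 < D := lt_of_lt_of_le one_pos hD1
    have hm0 : 0 < j - i := by omega
    apply final_contra (m := j - i) (ki := k i) (kj := k j) hm0
      (C1 := W i/2 * rrr^(k i)) (C2 := D*(W j + 1) * rrr^(k j))
      (C3 := W j/2 * rrr^(k j)) (C4 := D*(W i + 1) * rrr^(k i))
      (mul_pos (by linarith) (pow_pos hrp _))
      (mul_pos (by nlinarith) (pow_pos hrp _))
      (mul_pos (by linarith) (pow_pos hrp _))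
      (mul_pos (by nlinarith) (pow_pos hrp _))
      hh0 (hinf (j - i))
    apply hfr.mono
    rintro n ⟨⟨hc1, hc2⟩, hn2, hWb⟩
    have hhp := hhpos n hn2
    have hnp : (0:ℝ) < (n:ℝ)⁻¹ := by
      have : (2:ℝ) ≤ (n:ℝ) := by exact_mod_cast hn2
      positivity
    have hwi := hWb i hiS
    have hwj := hWb j hjS
    have hwipos : 0 < w i n := by linarith [hwi.1]
    have hwjpos : 0 < w j n := by linarith [hwj.1]
    have hpowm : hh n ^ (j - i) * hh n ^ (d-j) = hh n ^ (d-i) := by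
      rw [← pow_add]
      congr 1
      omega
    have hTi := hTnorm i n hn2 hid
    have hTj := hTnorm j n hn2 hjd2
    constructor
    · apply le_of_mul_le_mul_right _ (pow_pos hhp (d-j))
      calc (W i/2 * rrr^(k i)) * ((n:ℝ)⁻¹)^(k i) * hh n ^ (j-i) * hh n ^ (d-j)
          = (W i/2) * ((rrr * (n:ℝ)⁻¹)^(k i)) * hh n ^ (d-i) := by
            rw [← hpowm, mul_pow]; ring
        _ ≤ (w i n) * ((rrr * (n:ℝ)⁻¹)^(k i)) * hh n ^ (d-i) := by
            gcongr
            exact hwi.1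
        _ = ‖T i n‖ := by rw [hTi]; ring
        _ ≤ D * ‖T j n‖ := hc1
        _ = D * ((rrr * (n:ℝ)⁻¹)^(k j) * w j n * hh n ^ (d-j)) := by rw [hTj]
        _ ≤ D * ((rrr * (n:ℝ)⁻¹)^(k j) * (W j + 1) * hh n ^ (d-j)) := by
            gcongr
            exact hwj.2
        _ = (D*(W j + 1) * rrr^(k j)) * ((n:ℝ)⁻¹)^(k j) * hh n ^ (d-j) := by
            rw [mul_pow]; ring
    · apply le_of_mul_le_mul_right _ (pow_pos hhp (d-j))
      calc (W j/2 * rrr^(k j)) * ((n:ℝ)⁻¹)^(k j) * hh n ^ (d-j)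
          = (W j/2) * ((rrr * (n:ℝ)⁻¹)^(k j)) * hh n ^ (d-j) := by rw [mul_pow]; ring
        _ ≤ (w j n) * ((rrr * (n:ℝ)⁻¹)^(k j)) * hh n ^ (d-j) := by
            gcongr
            exact hwj.1
        _ = ‖T j n‖ := by rw [hTj]; ring
        _ ≤ D * ‖T i n‖ := hc2
        _ = D * ((rrr * (n:ℝ)⁻¹)^(k i) * w i n * hh n ^ (d-i)) := by rw [hTi]
        _ ≤ D * ((rrr * (n:ℝ)⁻¹)^(k i) * (W i + 1) * hh n ^ (d-i)) := by
            gcongr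
            exact hwi.2
        _ = (D*(W i + 1) * rrr^(k i)) * ((n:ℝ)⁻¹)^(k i) * hh n ^ (j-i) * hh n ^ (d-j) := by
            rw [← hpowm, mul_pow]; ring
  have hne : a ≠ b := by
    rcases hfreq.exists with ⟨n0, hne0, _⟩
    exact hne0
  rcases lt_or_gt_of_ne hne with hab | hab
  · apply key a b haS hbS hab
    apply hfreq.mono
    rintro n ⟨_, h1, h2, hn2, hWb⟩
    refine ⟨⟨h1, ?_⟩, hn2, hWb⟩
    calc ‖T b n‖ ≤ ‖T a n‖ := h2
      _ ≤ D * ‖T a n‖ := le_mul_of_one_le_left (norm_nonneg _) hD1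
  · apply key b a hbS haS hab
    apply hfreq.mono
    rintro n ⟨_, h1, h2, hn2, hWb⟩
    refine ⟨⟨?_, h1⟩, hn2, hWb⟩
    calc ‖T b n‖ ≤ ‖T a n‖ := h2
      _ ≤ D * ‖T a n‖ := le_mul_of_one_le_left (norm_nonneg _) hD1
end
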